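/- arXiv:2006.12428 — 5 statements merged into one kernel-verified Lean document; each statement's English description precedes it below -/
import Mathlib

section
/- Let f be sufficiently smooth and let a_1, ..., a_m be pairwise distinct. Then the k_1-th partial derivative of the divided difference f[a_1, ..., a_m] with respect to a_1 equals k_1! · f[a_1^{(k_1+1)}, a_2, ..., a_m], where a_1^{(k_1+1)} denotes a_1 repeated k_1+1 times. -/
open MeasureTheory

/-- Divided difference of `f` at (pairwise distinct) points `x 0, …, x (m-1)`,
in Lagrange polynomial form. -/
noncomputable def divDiff {m : ℕ} (f : ℝ → ℝ) (x : Fin m → ℝ) : ℝ :=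
  ∑ j, f (x j) / ∏ k ∈ Finset.univ.erase j, (x j - x k)

/-- Divided difference of `f` at `n+1` (not necessarily distinct) points given by the
Hermite–Genocchi integral representation over the standard simplex. -/
noncomputable def hgDivDiff {n : ℕ} (f : ℝ → ℝ) (a : Fin (n + 1) → ℝ) : ℝ :=
  ∫ t in {t : Fin n → ℝ | (∀ i, 0 ≤ t i) ∧ ∑ i, t i ≤ 1},
    iteratedDeriv n f ((∑ i, t i * a i.castSucc) + (1 - ∑ i, t i) * a (Fin.last n))

namespace HGAux

open Finset

def Sx (N : ℕ) : Set (Fin N → ℝ) := {t | (∀ i, 0 ≤ t i) ∧ ∑ i, t i ≤ 1}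

lemma mem_Sx {N : ℕ} (t : Fin N → ℝ) :
    t ∈ Sx N ↔ (∀ i, 0 ≤ t i) ∧ ∑ i, t i ≤ 1 := Iff.rfl

lemma isClosed_Sx (N : ℕ) : IsClosed (Sx N) := by
  have h1 : IsClosed {t : Fin N → ℝ | ∀ i, 0 ≤ t i} := by
    have : {t : Fin N → ℝ | ∀ i, 0 ≤ t i} = ⋂ i, {t | 0 ≤ t i} := by ext t; simp
    rw [this]
    exact isClosed_iInter fun i => isClosed_le continuous_const (continuous_apply i)
  have h2 : IsClosed {t : Fin N → ℝ | ∑ i, t i ≤ 1} :=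
    isClosed_le (continuous_finset_sum _ fun i _ => continuous_apply i) continuous_const
  exact h1.inter h2

lemma isCompact_Sx (N : ℕ) : IsCompact (Sx N) := by
  refine (isCompact_univ_pi fun i : Fin N => isCompact_Icc (a := (0:ℝ)) (b := 1)).of_isClosed_subset (isClosed_Sx N) ?_
  intro t ht
  intro i _
  exact ⟨ht.1 i, le_trans (Finset.single_le_sum (f := fun j => t j) (fun j _ => ht.1 j) (Finset.mem_univ i)) ht.2⟩

lemma measurableSet_Sx (N : ℕ) : MeasurableSet (Sx N) := (isClosed_Sx N).measurableSet

lemma integrableOn_Sx {N : ℕ} {g : (Fin N → ℝ) → ℝ} (hg : Continuous g) :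
    IntegrableOn g (Sx N) := hg.continuousOn.integrableOn_compact (isCompact_Sx N)


lemma mem_Sx_cons {N : ℕ} (u : ℝ) (t : Fin N → ℝ) :
    Fin.cons u t ∈ Sx (N+1) ↔ (0 ≤ u ∧ (∀ i, 0 ≤ t i)) ∧ u + ∑ i, t i ≤ 1 := by
  simp only [Sx, Set.mem_setOf_eq, Fin.forall_fin_succ, Fin.cons_zero, Fin.cons_succ,
    Fin.sum_cons, and_assoc]

lemma split {N : ℕ} (g : (Fin (N+1) → ℝ) → ℝ) (hg : Continuous g) :
    ∫ t in Sx (N+1), g t = ∫ t in Sx N, ∫ u in (0:ℝ)..(1 - ∑ i, t i), g (Fin.cons u t) := by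
  have hind : Integrable ((Sx (N+1)).indicator g) volume :=
    (integrableOn_Sx hg).integrable_indicator (measurableSet_Sx _)
  have mp : MeasurePreserving
      (MeasurableEquiv.piFinSuccAbove (fun _ : Fin (N+1) => ℝ) 0).symm
      (volume.prod volume) volume :=
    (volume_preserving_piFinSuccAbove (fun _ : Fin (N+1) => ℝ) 0).symm
  have hsymm : ∀ p : ℝ × (Fin N → ℝ),
      (MeasurableEquiv.piFinSuccAbove (fun _ : Fin (N+1) => ℝ) 0).symm p = Fin.cons p.1 p.2 := by
    intro p
    rw [MeasurableEquiv.piFinSuccAbove_symm_apply]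
    exact Fin.insertNth_zero' p.1 p.2
  have key : ∫ t in Sx (N+1), g t
      = ∫ p : ℝ × (Fin N → ℝ), (Sx (N+1)).indicator g (Fin.cons p.1 p.2)
          ∂(volume.prod volume) := by
    rw [← integral_indicator (measurableSet_Sx _),
      ← mp.integral_comp (MeasurableEquiv.measurableEmbedding _) ((Sx (N+1)).indicator g)]
    exact integral_congr_ae (Filter.Eventually.of_forall fun p => by dsimp only; rw [hsymm p])
  rw [key]
  have hintp : Integrable (fun p : ℝ × (Fin N → ℝ) => (Sx (N+1)).indicator g (Fin.cons p.1 p.2))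
      (volume.prod volume) := by
    have := (mp.integrable_comp_emb (MeasurableEquiv.measurableEmbedding _)).mpr hind
    refine this.congr (Filter.Eventually.of_forall fun p => ?_)
    simp only [Function.comp_apply, hsymm p]
  rw [integral_prod_symm _ hintp]
  rw [← integral_indicator (measurableSet_Sx N)]
  congr 1
  funext t
  by_cases ht : t ∈ Sx N
  · rw [Set.indicator_of_mem ht]
    have hA : (0:ℝ) ≤ 1 - ∑ i, t i := by
      have := ht.2; linarith
    have hset : ∀ u : ℝ, (Sx (N+1)).indicator g (Fin.cons u t)
        = (Set.Icc (0:ℝ) (1 - ∑ i, t i)).indicator (fun u => g (Fin.cons u t)) u := by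
      intro u
      by_cases hu : u ∈ Set.Icc (0:ℝ) (1 - ∑ i, t i)
      · rw [Set.indicator_of_mem hu, Set.indicator_of_mem]
        rw [mem_Sx_cons]
        exact ⟨⟨hu.1, ht.1⟩, by have := hu.2; linarith⟩
      · rw [Set.indicator_of_notMem hu, Set.indicator_of_notMem]
        rw [mem_Sx_cons]
        rintro ⟨⟨h1, -⟩, h2⟩
        exact hu ⟨h1, by linarith⟩
    simp_rw [hset]
    rw [integral_indicator measurableSet_Icc, integral_Icc_eq_integral_Ioc,
      ← intervalIntegral.integral_of_le hA]
  · rw [Set.indicator_of_notMem ht]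
    have hzero : ∀ u : ℝ, (Sx (N+1)).indicator g (Fin.cons u t) = 0 := by
      intro u
      rw [Set.indicator_of_notMem]
      rw [mem_Sx_cons]
      rintro ⟨⟨h1, h2⟩, h3⟩
      exact ht ⟨h2, by linarith⟩
    simp_rw [hzero, integral_zero]


lemma tri_swap (A : ℝ) (hA0 : 0 ≤ A) (F : ℝ → ℝ → ℝ) (hF : Continuous fun p : ℝ × ℝ => F p.1 p.2) :
    ∫ v in (0:ℝ)..A, ∫ w in v..A, F v w = ∫ w in (0:ℝ)..A, ∫ v in (0:ℝ)..w, F v w := by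
  set T : Set (ℝ × ℝ) := {p | 0 ≤ p.1 ∧ p.1 ≤ p.2 ∧ p.2 ≤ A} with hT
  have hTclosed : IsClosed T := by
    refine IsClosed.inter (isClosed_le continuous_const continuous_fst) ?_
    exact IsClosed.inter (isClosed_le continuous_fst continuous_snd)
      (isClosed_le continuous_snd continuous_const)
  have hTcomp : IsCompact T := by
    refine (isCompact_Icc (a := ((0:ℝ),(0:ℝ))) (b := (A,A))).of_isClosed_subset hTclosed ?_
    rintro ⟨v, w⟩ ⟨h1, h2, h3⟩
    exact ⟨⟨h1, le_trans h1 h2⟩, ⟨le_trans h2 h3, h3⟩⟩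
  set G : ℝ × ℝ → ℝ := T.indicator (fun p => F p.1 p.2) with hG
  have hGint : Integrable G volume := by
    have : Integrable G (volume.prod volume) := by
      rw [← Measure.volume_eq_prod]
      exact (hF.continuousOn.integrableOn_compact hTcomp).integrable_indicator
        hTclosed.measurableSet
    rwa [← Measure.volume_eq_prod] at this
  have hGint' : Integrable G (volume.prod volume) := by rwa [Measure.volume_eq_prod] at hGint
  have left : ∫ v in (0:ℝ)..A, ∫ w in v..A, F v w = ∫ p, G p ∂(volume.prod volume) := by
    rw [integral_prod _ hGint']
    have : ∀ v : ℝ, (∫ w, G (v, w)) =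
        (Set.Icc (0:ℝ) A).indicator (fun v => ∫ w in v..A, F v w) v := by
      intro v
      by_cases hv : v ∈ Set.Icc (0:ℝ) A
      · rw [Set.indicator_of_mem hv]
        have hsec : ∀ w, G (v, w) = (Set.Icc v A).indicator (fun w => F v w) w := by
          intro w
          by_cases hw : w ∈ Set.Icc v A
          · rw [Set.indicator_of_mem hw, hG, Set.indicator_of_mem]
            exact ⟨hv.1, hw.1, hw.2⟩
          · rw [Set.indicator_of_notMem hw, hG, Set.indicator_of_notMem]
            rintro ⟨-, h2, h3⟩; exact hw ⟨h2, h3⟩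
        simp_rw [hsec]
        rw [integral_indicator measurableSet_Icc, integral_Icc_eq_integral_Ioc,
          ← intervalIntegral.integral_of_le hv.2]
      · rw [Set.indicator_of_notMem hv]
        have : ∀ w, G (v, w) = 0 := by
          intro w
          rw [hG, Set.indicator_of_notMem]
          rintro ⟨h1, h2, h3⟩
          exact hv ⟨h1, le_trans h2 h3⟩
        simp_rw [this, integral_zero]
    simp_rw [this]
    rw [integral_indicator measurableSet_Icc, integral_Icc_eq_integral_Ioc]
    rw [← intervalIntegral.integral_of_le hA0]
  have right : ∫ w in (0:ℝ)..A, ∫ v in (0:ℝ)..w, F v w = ∫ p, G p ∂(volume.prod volume) := by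
    rw [integral_prod_symm _ hGint']
    have : ∀ w : ℝ, (∫ v, G (v, w)) =
        (Set.Icc (0:ℝ) A).indicator (fun w => ∫ v in (0:ℝ)..w, F v w) w := by
      intro w
      by_cases hw : w ∈ Set.Icc (0:ℝ) A
      · rw [Set.indicator_of_mem hw]
        have hsec : ∀ v, G (v, w) = (Set.Icc (0:ℝ) w).indicator (fun v => F v w) v := by
          intro v
          by_cases hv : v ∈ Set.Icc (0:ℝ) w
          · rw [Set.indicator_of_mem hv, hG, Set.indicator_of_mem]
            exact ⟨hv.1, hv.2, hw.2⟩
          · rw [Set.indicator_of_notMem hv, hG, Set.indicator_of_notMem]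
            rintro ⟨h1, h2, -⟩; exact hv ⟨h1, h2⟩
        simp_rw [hsec]
        rw [integral_indicator measurableSet_Icc, integral_Icc_eq_integral_Ioc,
          ← intervalIntegral.integral_of_le hw.1]
      · rw [Set.indicator_of_notMem hw]
        have : ∀ v, G (v, w) = 0 := by
          intro v
          rw [hG, Set.indicator_of_notMem]
          rintro ⟨h1, h2, h3⟩
          exact hw ⟨le_trans h1 h2, h3⟩
        simp_rw [this, integral_zero]
    simp_rw [this]
    rw [integral_indicator measurableSet_Icc, integral_Icc_eq_integral_Ioc]
    rw [← intervalIntegral.integral_of_le hA0]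
  rw [left, right]

lemma tri (j : ℕ) (A : ℝ) (hA0 : 0 ≤ A) (h : ℝ → ℝ) (hh : Continuous h) :
    ∫ v in (0:ℝ)..A, ∫ u in (0:ℝ)..(A - v), u ^ j * h (u + v)
      = ∫ σ in (0:ℝ)..A, σ ^ (j+1) / (j+1) * h σ := by
  have step1 : ∀ v : ℝ, (∫ u in (0:ℝ)..(A - v), u ^ j * h (u + v))
      = ∫ w in v..A, (w - v) ^ j * h w := by
    intro v
    have := intervalIntegral.integral_comp_add_right (a := (0:ℝ)) (b := A - v)
      (fun w => (w - v) ^ j * h w) v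
    simp only [zero_add, sub_add_cancel] at this
    rw [← this]
    congr 1
    funext u
    simp [add_sub_cancel_right]
  simp_rw [step1]
  rw [tri_swap A hA0 (fun v w => (w - v) ^ j * h w) (by fun_prop)]
  have step2 : ∀ w : ℝ, (∫ v in (0:ℝ)..w, (w - v) ^ j * h w)
      = w ^ (j+1) / (j+1) * h w := by
    intro w
    rw [intervalIntegral.integral_mul_const]
    have := intervalIntegral.integral_comp_sub_left (a := (0:ℝ)) (b := w)
      (fun u => u ^ j) w
    simp only [sub_zero, sub_self] at this
    rw [this, integral_pow]
    ring
  simp_rw [step2]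


noncomputable def Xp (N : ℕ) (d : ℕ → ℝ) (t : Fin N → ℝ) : ℝ :=
  (∑ i, t i * d i) + (1 - ∑ i, t i) * d N

lemma continuous_Xp (N : ℕ) (d : ℕ → ℝ) : Continuous (Xp N d) := by
  unfold Xp; fun_prop

lemma Xp_cons (N : ℕ) (d : ℕ → ℝ) (u : ℝ) (t : Fin N → ℝ) :
    Xp (N+1) d (Fin.cons u t) = Xp N (fun i => d (i+1)) t + u * (d 0 - d (N+1)) := by
  unfold Xp
  rw [Fin.sum_univ_succ, Fin.sum_cons]
  simp only [Fin.cons_zero, Fin.cons_succ, Fin.val_succ, Fin.val_zero]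
  ring

noncomputable def R (F : ℝ → ℝ) (j N : ℕ) (d : ℕ → ℝ) : ℝ :=
  ∫ t in Sx (N+1), (t 0)^j * F (Xp (N+1) d t)

lemma GM (F : ℝ → ℝ) (hF : Continuous F) (j N : ℕ) (d : ℕ → ℝ) (hd : d 1 = d 0) :
    R F j (N+1) d = ((j:ℝ)+1)⁻¹ * R F (j+1) N (fun i => d (i+1)) := by
  set ds : ℕ → ℝ := fun i => d (i+1) with hds
  set c : ℝ := d 0 - d (N+2) with hc
  set φ : (Fin (N+1) → ℝ) → ℝ → ℝ := fun t u => u ^ j * F (Xp (N+1) ds t + u * c) with hφ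
  have hφc : Continuous (Function.uncurry φ) := by
    apply Continuous.mul (by fun_prop)
    exact hF.comp (by have := continuous_Xp (N+1) ds; fun_prop)
  have step1 : R F j (N+1) d = ∫ t in Sx (N+1), ∫ u in (0:ℝ)..(1 - ∑ i, t i), φ t u := by
    rw [R, split _ (by have := continuous_Xp (N+2) d; fun_prop)]
    apply setIntegral_congr_fun (measurableSet_Sx _)
    intro t _
    simp only [Fin.cons_zero]
    congr 1
    funext u
    rw [hφ, Xp_cons]
  rw [step1]
  set H : (Fin (N+1) → ℝ) → ℝ := fun t => ∫ u in (0:ℝ)..(1 - ∑ i, t i), φ t u with hH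
  have hHc : Continuous H := by
    apply intervalIntegral.continuous_parametric_intervalIntegral_of_continuous hφc
    fun_prop
  rw [split H hHc]
  have step2 : R F (j+1) N ds = ∫ t' in Sx N,
      ∫ σ in (0:ℝ)..(1 - ∑ i, t' i), σ ^ (j+1) * F (Xp N (fun i => ds (i+1)) t' + σ * c) := by
    rw [R, split _ (by have := continuous_Xp (N+1) ds; fun_prop)]
    apply setIntegral_congr_fun (measurableSet_Sx _)
    intro t' _
    simp only [Fin.cons_zero]
    congr 1
    funext σ
    rw [Xp_cons]
    have h2 : ds 0 - ds (N+1) = c := by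
      show d (0+1) - d (N+1+1) = c
      rw [hc]; norm_num [hd]
    rw [h2]
  rw [step2, ← integral_const_mul]
  apply setIntegral_congr_fun (measurableSet_Sx _)
  intro t' ht'
  have hA0 : (0:ℝ) ≤ 1 - ∑ i, t' i := by
    have := ((mem_Sx t').mp ht').2; linarith
  have hcons : ∀ v : ℝ, H (Fin.cons v t') =
      ∫ u in (0:ℝ)..((1 - ∑ i, t' i) - v), u ^ j * F (Xp N (fun i => ds (i+1)) t' + (u + v) * c) := by
    intro v
    rw [hH]
    simp only [Fin.sum_cons]
    have : (1 : ℝ) - (v + ∑ i, t' i) = (1 - ∑ i, t' i) - v := by ring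
    rw [this]
    congr 1
    funext u
    show u ^ j * F (Xp (N+1) ds (Fin.cons v t') + u * c) = _
    rw [Xp_cons]
    have : Xp N (fun i => ds (i+1)) t' + v * (ds 0 - ds (N+1)) + u * c
        = Xp N (fun i => ds (i+1)) t' + (u + v) * c := by
      rw [hds, hc]
      show Xp N _ t' + v * (d 1 - d (N+2)) + u * (d 0 - d (N+2)) = _
      rw [hd]; ring
    rw [this]
  simp_rw [hcons]
  rw [tri j _ hA0 (fun σ => F (Xp N (fun i => ds (i+1)) t' + σ * c))
    (hF.comp (by fun_prop))]
  rw [← intervalIntegral.integral_const_mul]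
  congr 1
  funext σ
  have : ((j:ℝ)+1) ≠ 0 := by positivity
  field_simp


lemma GM_iter (F : ℝ → ℝ) (hF : Continuous F) (r : ℕ) : ∀ j N : ℕ, ∀ d : ℕ → ℝ,
    (∀ i ≤ r, d i = d 0) →
    R F j (r + N) d
      = (∏ i ∈ Finset.range r, ((j:ℝ)+1+i))⁻¹ * R F (j+r) N (fun i => d (i+r)) := by
  induction r with
  | zero =>
    intro j N d _
    simp only [Finset.range_zero, Finset.prod_empty, inv_one, one_mul, Nat.zero_add,
      Nat.add_zero]
  | succ r ih =>
    intro j N d hd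
    have hrw : r + 1 + N = r + (N + 1) := by omega
    rw [hrw, ih j (N+1) d (fun i hi => hd i (by omega))]
    rw [GM F hF (j+r) N (fun i => d (i+r)) (by rw [hd (1+r) (by omega), hd (0+r) (by omega)])]
    have h1 : (fun i => d (i + 1 + r)) = (fun i => d (i + (r + 1))) := by
      funext i; congr 1; omega
    rw [h1, Finset.prod_range_succ]
    have h2 : ((j:ℝ) + 1 + r) = (((j+r:ℕ):ℝ) + 1) := by push_cast; ring
    rw [h2, mul_inv, mul_assoc]
    norm_num [Nat.add_assoc]


noncomputable def DD (f : ℝ → ℝ) (N : ℕ) (d : ℕ → ℝ) : ℝ :=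
  ∑ j ∈ Finset.range (N+1), f (d j) / ∏ k ∈ (Finset.range (N+1)).erase j, (d j - d k)

lemma erase0_image (n : ℕ) :
    (Finset.range (n+1)).erase 0 = Finset.image (·+1) (Finset.range n) := by
  ext k
  simp only [mem_erase, mem_range, mem_image]
  constructor
  · rintro ⟨h1, h2⟩; exact ⟨k-1, by omega, by omega⟩
  · rintro ⟨m, hm, rfl⟩; omega

lemma eraseN_range (n : ℕ) : (Finset.range (n+1)).erase n = Finset.range n := by
  ext k; simp only [mem_erase, mem_range]; omega

lemma erase_mid_image (N i : ℕ) (hi : i < N) :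
    (((Finset.range (N+2)).erase (i+1)).erase 0).erase (N+1)
      = Finset.image (·+1) ((Finset.range N).erase i) := by
  ext k
  simp only [mem_erase, mem_range, mem_image]
  constructor
  · rintro ⟨h1, h2, h3, h4⟩; exact ⟨k-1, ⟨by omega, by omega⟩, by omega⟩
  · rintro ⟨m, ⟨hm1, hm2⟩, rfl⟩; omega

lemma erase_erase_mid (N i : ℕ) (hi : i < N) :
    ((Finset.range (N+1)).erase i).erase N = (Finset.range N).erase i := by
  ext k; simp only [mem_erase, mem_range]; omega

lemma DD_rec (f : ℝ → ℝ) (N : ℕ) (d : ℕ → ℝ)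
    (hinj : ∀ i ≤ N+1, ∀ j ≤ N+1, d i = d j → i = j) :
    DD f (N+1) d * (d 0 - d (N+1))
      = DD f N (fun k => if k < N then d (k+1) else d 0) - DD f N (fun k => d (k+1)) := by
  have hne : ∀ {i j : ℕ}, i ≤ N+1 → j ≤ N+1 → i ≠ j → d i - d j ≠ 0 := by
    intro i j hi hj hij
    exact sub_ne_zero.mpr (fun h => hij (hinj _ hi _ hj h))
  set e : ℕ → ℝ := fun k => if k < N then d (k+1) else d 0 with he_def
  set ds : ℕ → ℝ := fun k => d (k+1) with hds_def
  set G : ℕ → ℝ := fun j =>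
    f (d j) / (∏ k ∈ (Finset.range (N+2)).erase j, (d j - d k)) * (d 0 - d (N+1)) with hG
  set He : ℕ → ℝ := fun j => f (e j) / ∏ k ∈ (Finset.range (N+1)).erase j, (e j - e k) with hHe
  set Hd : ℕ → ℝ := fun j => f (ds j) / ∏ k ∈ (Finset.range (N+1)).erase j, (ds j - ds k)
    with hHd
  have lhs_eq : DD f (N+1) d * (d 0 - d (N+1))
      = (∑ j ∈ Finset.range N, G (j+1) + G (N+1)) + G 0 := by
    rw [DD, Finset.sum_mul, Finset.sum_range_succ' _ (N+1), Finset.sum_range_succ]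
  have rhs_eq : DD f N e - DD f N ds
      = (∑ j ∈ Finset.range N, He j + He N) - (∑ j ∈ Finset.range N, Hd j + Hd N) := by
    rw [DD, DD, Finset.sum_range_succ, Finset.sum_range_succ]
  rw [lhs_eq, rhs_eq]
  -- term identities
  have h0 : G 0 = He N := by
    have hP : (∏ k ∈ (Finset.range (N+2)).erase 0, (d 0 - d k))
        = (∏ k ∈ Finset.range N, (d 0 - d (k+1))) * (d 0 - d (N+1)) := by
      rw [erase0_image (N+1), Finset.prod_image (by intro a _ b _ h; exact Nat.succ_injective h),
        Finset.prod_range_succ]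
    have hPe : (∏ k ∈ (Finset.range (N+1)).erase N, (e N - e k))
        = ∏ k ∈ Finset.range N, (d 0 - d (k+1)) := by
      rw [eraseN_range]
      apply Finset.prod_congr rfl
      intro k hk
      rw [he_def]
      simp only [lt_irrefl, if_false, if_neg (lt_irrefl N)]
      rw [if_pos (mem_range.mp hk)]
    have hQ : (∏ k ∈ Finset.range N, (d 0 - d (k+1))) ≠ 0 := by
      apply Finset.prod_ne_zero_iff.mpr
      intro k hk
      have hkN := mem_range.mp hk
      exact hne (by omega) (by omega) (by omega)
    have hc : d 0 - d (N+1) ≠ 0 := hne (by omega) (by omega) (by omega)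
    rw [hG, hHe]
    simp only []
    rw [hP, hPe]
    have heN : e N = d 0 := by rw [he_def]; simp
    rw [heN]
    field_simp
  have hlast : G (N+1) = - Hd N := by
    have hP : (∏ k ∈ (Finset.range (N+2)).erase (N+1), (d (N+1) - d k))
        = (d (N+1) - d 0) * ∏ k ∈ Finset.range N, (d (N+1) - d (k+1)) := by
      have : (Finset.range (N+2)).erase (N+1) = Finset.range (N+1) := eraseN_range (N+1)
      rw [this, Finset.prod_range_succ' (fun k => d (N+1) - d k)]
      ring
    have hPd : (∏ k ∈ (Finset.range (N+1)).erase N, (ds N - ds k))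
        = ∏ k ∈ Finset.range N, (d (N+1) - d (k+1)) := by
      rw [eraseN_range]
    have hQ : (∏ k ∈ Finset.range N, (d (N+1) - d (k+1))) ≠ 0 := by
      apply Finset.prod_ne_zero_iff.mpr
      intro k hk
      have hkN := mem_range.mp hk
      exact hne (by omega) (by omega) (by omega)
    have hX : d (N+1) - d 0 ≠ 0 := hne (by omega) (by omega) (by omega)
    rw [hG, hHd]
    simp only []
    rw [hP, hPd]
    have : ds N = d (N+1) := rfl
    rw [this]
    field_simp
    ring
  have hmid : ∀ j ∈ Finset.range N, G (j+1) = He j - Hd j := by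
    intro j hj
    have hjN : j < N := mem_range.mp hj
    set Q : ℝ := ∏ k ∈ (Finset.range N).erase j, (d (j+1) - d (k+1)) with hQdef
    have hQ : Q ≠ 0 := by
      apply Finset.prod_ne_zero_iff.mpr
      intro k hk
      have := mem_erase.mp hk
      exact hne (by omega) (by have := mem_range.mp this.2; omega) (by omega)
    have hX : d (j+1) - d 0 ≠ 0 := hne (by omega) (by omega) (by omega)
    have hY : d (j+1) - d (N+1) ≠ 0 := hne (by omega) (by omega) (by omega)
    have hP : (∏ k ∈ (Finset.range (N+2)).erase (j+1), (d (j+1) - d k))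
        = (d (j+1) - d 0) * ((d (j+1) - d (N+1)) * Q) := by
      have h0mem : (0:ℕ) ∈ (Finset.range (N+2)).erase (j+1) := by
        simp only [mem_erase, mem_range]; omega
      rw [← Finset.mul_prod_erase _ _ h0mem]
      have hNmem : (N+1) ∈ ((Finset.range (N+2)).erase (j+1)).erase 0 := by
        simp only [mem_erase, mem_range]; omega
      rw [← Finset.mul_prod_erase _ _ hNmem]
      rw [erase_mid_image N j hjN, Finset.prod_image (by intro a _ b _ h; exact Nat.succ_injective h)]
    have hPe : (∏ k ∈ (Finset.range (N+1)).erase j, (e j - e k))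
        = (d (j+1) - d 0) * Q := by
      have hNmem : N ∈ (Finset.range (N+1)).erase j := by
        simp only [mem_erase, mem_range]; omega
      rw [← Finset.mul_prod_erase _ _ hNmem, erase_erase_mid N j hjN]
      have hej : e j = d (j+1) := by rw [he_def]; simp [hjN]
      have heN : e N = d 0 := by rw [he_def]; simp
      rw [hej, heN]
      congr 1
      apply Finset.prod_congr rfl
      intro k hk
      have hkN : k < N := mem_range.mp (mem_erase.mp hk).2
      rw [he_def]
      simp only [if_pos hkN]
    have hPd : (∏ k ∈ (Finset.range (N+1)).erase j, (ds j - ds k))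
        = (d (j+1) - d (N+1)) * Q := by
      have hNmem : N ∈ (Finset.range (N+1)).erase j := by
        simp only [mem_erase, mem_range]; omega
      rw [← Finset.mul_prod_erase _ _ hNmem, erase_erase_mid N j hjN]
    rw [hG, hHe, hHd]
    simp only []
    rw [hP, hPe, hPd]
    have hej : e j = d (j+1) := by rw [he_def]; simp [hjN]
    have hdsj : ds j = d (j+1) := rfl
    rw [hej, hdsj]
    field_simp
    ring
  rw [Finset.sum_congr rfl hmid, h0, hlast, Finset.sum_sub_distrib]
  ring


noncomputable def Ig (f : ℝ → ℝ) (N : ℕ) (d : ℕ → ℝ) : ℝ :=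
  ∫ t in Sx N, iteratedDeriv N f (Xp N d t)

lemma Sx_zero : Sx 0 = Set.univ := by
  ext t
  simp [mem_Sx]

lemma vol_Sx_zero : volume (Sx 0) = 1 := by
  rw [Sx_zero]
  rw [show (volume : Measure (Fin 0 → ℝ)) = Measure.pi (fun _ => volume) from rfl]
  rw [Measure.pi_univ]
  simp

lemma HG : ∀ (N : ℕ) (f : ℝ → ℝ) (d : ℕ → ℝ), ContDiff ℝ (N : ℕ∞) f →
    (∀ i ≤ N, ∀ j ≤ N, d i = d j → i = j) → Ig f N d = DD f N d := by
  intro N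
  induction N with
  | zero =>
    intro f d _ _
    rw [Ig, DD]
    have hX : ∀ t : Fin 0 → ℝ, Xp 0 d t = d 0 := by
      intro t
      rw [Xp]
      simp
    simp only [iteratedDeriv_zero, hX]
    rw [setIntegral_const, Measure.real, vol_Sx_zero]
    simp
  | succ N ih =>
    intro f d hf hinj
    have hc : d 0 - d (N+1) ≠ 0 :=
      sub_ne_zero.mpr (fun h => by have := hinj 0 (by omega) (N+1) (by omega) h; omega)
    set e : ℕ → ℝ := fun k => if k < N then d (k+1) else d 0 with he_def
    set ds : ℕ → ℝ := fun k => d (k+1) with hds_def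
    set c : ℝ := d 0 - d (N+1) with hc_def
    have hcont : Continuous (iteratedDeriv (N+1) f) :=
      hf.continuous_iteratedDeriv (N+1) (by norm_cast)
    have hXe : ∀ t : Fin N → ℝ, Xp N ds t + (1 - ∑ i, t i) * c = Xp N e t := by
      intro t
      rw [Xp, Xp]
      have h1 : ∀ i : Fin N, e (i : ℕ) = d (i + 1) := by
        intro i
        rw [he_def]
        simp only [if_pos i.isLt]
      have h2 : e N = d 0 := by rw [he_def]; simp
      rw [show (∑ i : Fin N, t i * e (i:ℕ)) = ∑ i : Fin N, t i * d ((i:ℕ)+1) from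
        Finset.sum_congr rfl fun i _ => by rw [h1 i], h2]
      show (∑ i : Fin N, t i * d ((i:ℕ)+1)) + (1 - ∑ i, t i) * d (N+1) + _ = _
      ring
    have step : Ig f (N+1) d = ∫ t in Sx N,
        (iteratedDeriv N f (Xp N e t) - iteratedDeriv N f (Xp N ds t)) / c := by
      rw [Ig, split (g := fun t => iteratedDeriv (N+1) f (Xp (N+1) d t)) (hcont.comp (continuous_Xp _ _))]
      apply setIntegral_congr_fun (measurableSet_Sx N)
      intro t ht
      simp only []
      have hint : ∀ u : ℝ, HasDerivAt
          (fun u => iteratedDeriv N f (Xp N ds t + u * c) / c)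
          (iteratedDeriv (N+1) f (Xp N ds t + u * c)) u := by
        intro u
        have haff : HasDerivAt (fun u : ℝ => Xp N ds t + u * c) c u := by
          simpa using ((hasDerivAt_id u).mul_const c).const_add (Xp N ds t)
        have hd1 : HasDerivAt (iteratedDeriv N f)
            (iteratedDeriv (N+1) f (Xp N ds t + u * c)) (Xp N ds t + u * c) := by
          have hdiff := (hf.differentiable_iteratedDeriv N
            (by exact_mod_cast Nat.lt_succ_self N)).differentiableAt
            (x := Xp N ds t + u * c)
          have := hdiff.hasDerivAt
          rwa [← iteratedDeriv_succ, show N + 1 = N.succ from rfl] at this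
        have hcomp := (hd1.comp u haff).div_const c
        rwa [mul_div_cancel_right₀ _ hc] at hcomp
      have hFTC := intervalIntegral.integral_eq_sub_of_hasDerivAt
        (f := fun u => iteratedDeriv N f (Xp N ds t + u * c) / c)
        (f' := fun u => iteratedDeriv (N+1) f (Xp N ds t + u * c))
        (a := 0) (b := 1 - ∑ i, t i)
        (fun u _ => hint u)
        ((hcont.comp (by fun_prop)).intervalIntegrable _ _)
      calc ∫ u in (0:ℝ)..(1 - ∑ i, t i), iteratedDeriv (N+1) f (Xp (N+1) d (Fin.cons u t))
          = ∫ u in (0:ℝ)..(1 - ∑ i, t i), iteratedDeriv (N+1) f (Xp N ds t + u * c) := by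
            congr 1
            funext u
            rw [Xp_cons]
        _ = iteratedDeriv N f (Xp N ds t + (1 - ∑ i, t i) * c) / c
              - iteratedDeriv N f (Xp N ds t + 0 * c) / c := hFTC
        _ = (iteratedDeriv N f (Xp N e t) - iteratedDeriv N f (Xp N ds t)) / c := by
            rw [hXe t]
            ring_nf
    have hcontN : Continuous (iteratedDeriv N f) :=
      hf.continuous_iteratedDeriv N (by exact_mod_cast Nat.le_succ N)
    have step2 : Ig f (N+1) d = (Ig f N e - Ig f N ds) / c := by
      rw [step]
      rw [integral_div]
      congr 1
      have h1 : IntegrableOn (fun a => iteratedDeriv N f (Xp N e a)) (Sx N) volume :=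
        integrableOn_Sx (by exact hcontN.comp (continuous_Xp _ _))
      have h2 : IntegrableOn (fun a => iteratedDeriv N f (Xp N ds a)) (Sx N) volume :=
        integrableOn_Sx (by exact hcontN.comp (continuous_Xp _ _))
      rw [integral_sub h1 h2]
      rfl
    have hfN : ContDiff ℝ N f := hf.of_le (by exact_mod_cast Nat.le_succ N)
    have hinj_e : ∀ i ≤ N, ∀ j ≤ N, e i = e j → i = j := by
      intro i hi j hj hij
      simp only [he_def] at hij
      split_ifs at hij with h1 h2 h2
      · have := hinj (i+1) (by omega) (j+1) (by omega) hij; omega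
      · have := hinj (i+1) (by omega) 0 (by omega) hij; omega
      · have := hinj 0 (by omega) (j+1) (by omega) hij; omega
      · omega
    have hinj_ds : ∀ i ≤ N, ∀ j ≤ N, ds i = ds j → i = j := by
      intro i hi j hj hij
      have := hinj (i+1) (by omega) (j+1) (by omega) hij
      omega
    rw [step2, ih f e hfN hinj_e, ih f ds hfN hinj_ds]
    rw [div_eq_iff hc]
    exact (DD_rec f N d hinj).symm


lemma Xp_update (m : ℕ) (d : ℕ → ℝ) (x : ℝ) (t : Fin (m+1) → ℝ) :
    Xp (m+1) (Function.update d 0 x) t = t 0 * x + Xp (m+1) (Function.update d 0 0) t := by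
  rw [Xp, Xp]
  simp only [Fin.sum_univ_succ]
  have h0 : ∀ z : ℝ, Function.update d 0 z ((0 : Fin (m+1)) : ℕ) = z := by
    intro z
    simp [Fin.val_zero]
  have hs : ∀ z : ℝ, ∀ i : Fin m, Function.update d 0 z ((i.succ : Fin (m+1)) : ℕ) = d i.succ := by
    intro z i
    rw [Function.update_of_ne]
    simp [Fin.val_succ]
  have hl : ∀ z : ℝ, Function.update d 0 z (m+1) = d (m+1) := by
    intro z
    rw [Function.update_of_ne]
    omega
  simp_rw [h0, hs, hl]
  ring

lemma hasDerivAt_W (m k : ℕ) (F F' : ℝ → ℝ) (hF' : Continuous F')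
    (hder : ∀ x, HasDerivAt F (F' x) x) (d : ℕ → ℝ) (y : ℝ) :
    HasDerivAt
      (fun x => ∫ t in Sx (m+1), (t 0)^k * F (Xp (m+1) (Function.update d 0 x) t))
      (∫ t in Sx (m+1), (t 0)^(k+1) * F' (Xp (m+1) (Function.update d 0 y) t)) y := by
  have hFc : Continuous F := by
    have : Differentiable ℝ F := fun x => (hder x).differentiableAt
    exact this.continuous
  set C : (Fin (m+1) → ℝ) → ℝ := fun t => Xp (m+1) (Function.update d 0 0) t with hC
  have hCc : Continuous C := continuous_Xp _ _
  -- the compact set of arguments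
  set K : Set ℝ := (fun p : (Fin (m+1) → ℝ) × ℝ => p.1 0 * p.2 + C p.1) ''
    (Sx (m+1) ×ˢ Metric.closedBall y 1) with hK
  have hKcomp : IsCompact K :=
    ((isCompact_Sx (m+1)).prod (isCompact_closedBall y 1)).image (by fun_prop)
  obtain ⟨M, hM⟩ := hKcomp.exists_bound_of_continuousOn hF'.continuousOn
  set μ := volume.restrict (Sx (m+1)) with hμ
  have hfin : IsFiniteMeasure μ := by
    constructor
    rw [hμ, Measure.restrict_apply_univ]
    exact (isCompact_Sx (m+1)).measure_lt_top
  have hw : ∀ n : ℕ, Continuous (fun t : Fin (m+1) → ℝ => (t 0)^n) :=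
    fun n => (continuous_apply _).pow n
  have key := hasDerivAt_integral_of_dominated_loc_of_deriv_le
    (F := fun x t => (t 0)^k * F (Xp (m+1) (Function.update d 0 x) t))
    (F' := fun x t => (t 0)^(k+1) * F' (Xp (m+1) (Function.update d 0 x) t))
    (x₀ := y) (s := Metric.ball y 1) (μ := μ) (bound := fun _ => |M|) (Metric.ball_mem_nhds y one_pos)
    ?_ ?_ ?_ ?_ ?_ ?_
  · exact key.2
  · -- measurability of F x near y
    filter_upwards with x
    exact ((hw k).mul (hFc.comp (continuous_Xp _ _))).aestronglyMeasurable
  · exact integrableOn_Sx (by exact (hw k).mul (hFc.comp (continuous_Xp _ _)))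
  · exact ((hw (k+1)).mul (hF'.comp (continuous_Xp _ _))).aestronglyMeasurable
  · -- bound
    rw [hμ, ae_restrict_iff' (measurableSet_Sx _)]
    filter_upwards with t ht
    intro x hx
    have ht0 : 0 ≤ t 0 := ((mem_Sx t).mp ht).1 0
    have ht1 : t 0 ≤ 1 := by
      have := ((mem_Sx t).mp ht).2
      have := Finset.single_le_sum (f := fun j => t j) (fun j _ => ((mem_Sx t).mp ht).1 j)
        (Finset.mem_univ (0 : Fin (m+1)))
      linarith
    have harg : Xp (m+1) (Function.update d 0 x) t ∈ K := by
      rw [hK]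
      refine ⟨(t, x), ⟨ht, Metric.ball_subset_closedBall hx⟩, ?_⟩
      show t 0 * x + C t = _
      rw [hC]
      exact (Xp_update m d x t).symm
    have hb := hM _ harg
    rw [norm_mul]
    calc ‖(t 0)^(k+1)‖ * ‖F' (Xp (m+1) (Function.update d 0 x) t)‖
        ≤ 1 * |M| := by
          apply mul_le_mul
          · rw [norm_pow, Real.norm_eq_abs, abs_of_nonneg ht0]
            exact pow_le_one₀ ht0 ht1
          · exact le_trans hb (le_abs_self M)
          · exact norm_nonneg _
          · norm_num
      _ = |M| := one_mul _
  · exact integrable_const _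
  · -- differentiability
    filter_upwards with t
    intro x _
    have haff : HasDerivAt (fun x : ℝ => Xp (m+1) (Function.update d 0 x) t) (t 0) x := by
      have heq : (fun x : ℝ => Xp (m+1) (Function.update d 0 x) t)
          = fun x => t 0 * x + C t := funext fun x => by rw [Xp_update m d x t, hC]
      rw [heq]
      simpa using ((hasDerivAt_id x).const_mul (t 0)).add_const (C t)
    have := ((hder _).comp x haff).const_mul ((t 0)^k)
    convert this using 1
    · rfl
    · rfl
    · ring


lemma prod_range_one_add (r : ℕ) :
    (∏ i ∈ Finset.range r, ((0:ℝ)+1+i)) = (r.factorial : ℝ) := by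
  induction r with
  | zero => simp
  | succ r ih =>
    rw [Finset.prod_range_succ, ih, Nat.factorial_succ]
    push_cast
    ring



lemma R_one (j : ℕ) (d : ℕ → ℝ) : R (fun _ => (1:ℝ)) j 0 d = ((j:ℝ)+1)⁻¹ := by
  rw [R, split (g := fun t : Fin 1 → ℝ => (t 0)^j * (fun _ : ℝ => (1:ℝ)) (Xp 1 d t))
    (by exact ((continuous_apply _).pow j).mul continuous_const)]
  have h1 : ∀ t : Fin 0 → ℝ, (∫ u in (0:ℝ)..(1 - ∑ i, t i),
      ((Fin.cons u t : Fin 1 → ℝ) 0)^j * (fun _ : ℝ => (1:ℝ)) (Xp 1 d (Fin.cons u t)))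
      = ((j:ℝ)+1)⁻¹ := by
    intro t
    have hsum : (∑ i : Fin 0, t i) = 0 := by simp
    rw [hsum]
    simp only [Fin.cons_zero, mul_one, sub_zero]
    rw [integral_pow]
    push_cast
    norm_num
  simp_rw [h1]
  rw [setIntegral_const, Measure.real, vol_Sx_zero]
  simp

lemma vol_Sx (N : ℕ) : ∫ t in Sx N, (1:ℝ) = ((N.factorial : ℝ))⁻¹ := by
  cases N with
  | zero =>
    rw [setIntegral_const, Measure.real, vol_Sx_zero]
    simp
  | succ M =>
    have h1 : R (fun _ => (1:ℝ)) 0 M (fun _ => 0) = ∫ t in Sx (M+1), (1:ℝ) := by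
      rw [R]
      apply setIntegral_congr_fun (measurableSet_Sx _)
      intro t _
      simp
    rw [← h1]
    have h2 := GM_iter (fun _ => (1:ℝ)) continuous_const M 0 0 (fun _ => 0)
      (fun i _ => rfl)
    simp only [Nat.add_zero, Nat.zero_add] at h2
    rw [h2, R_one]
    simp only [Nat.cast_zero]
    rw [prod_range_one_add]
    rw [Nat.factorial_succ]
    push_cast
    rw [mul_inv]
    ring

lemma Xp_congr {N : ℕ} {d d' : ℕ → ℝ} (h : ∀ i ≤ N, d i = d' i) (t : Fin N → ℝ) :
    Xp N d t = Xp N d' t := by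
  show (∑ i, t i * d i) + (1 - ∑ i, t i) * d N = (∑ i, t i * d' i) + (1 - ∑ i, t i) * d' N
  congr 1
  · exact Finset.sum_congr rfl fun i _ => by rw [h (i:ℕ) (le_of_lt i.isLt)]
  · rw [h N le_rfl]

lemma hg_eq (n : ℕ) (f : ℝ → ℝ) (b : Fin (n+1) → ℝ) (d : ℕ → ℝ)
    (h : ∀ i : ℕ, (hi : i < n+1) → d i = b ⟨i, hi⟩) :
    hgDivDiff f b = ∫ t in Sx n, iteratedDeriv n f (Xp n d t) := by
  rw [show hgDivDiff f b = ∫ t in Sx n, iteratedDeriv n f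
    ((∑ i, t i * b i.castSucc) + (1 - ∑ i, t i) * b (Fin.last n)) from rfl]
  apply setIntegral_congr_fun (measurableSet_Sx n)
  intro t _
  have hXp : Xp n d t
      = (∑ i, t i * b i.castSucc) + (1 - ∑ i, t i) * b (Fin.last n) := by
    show (∑ i, t i * d (i:ℕ)) + (1 - ∑ i, t i) * d n = _
    have hcast : ∀ i : Fin n, b i.castSucc = d (i:ℕ) := fun i => by
      rw [h (i:ℕ) (by omega)]
      exact congrArg b (by apply Fin.ext; simp)
    have hlast : b (Fin.last n) = d n := by
      rw [h n (by omega)]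
      exact congrArg b (by apply Fin.ext; simp)
    rw [hlast]
    congr 1
    exact Finset.sum_congr rfl fun i _ => by rw [hcast i]
  dsimp only
  rw [hXp]

lemma dd_eq (n : ℕ) (f : ℝ → ℝ) (b : Fin (n+1) → ℝ) (d : ℕ → ℝ)
    (h : ∀ i : ℕ, (hi : i < n+1) → d i = b ⟨i, hi⟩) :
    divDiff f b = DD f n d := by
  rw [divDiff, DD,
    ← Fin.sum_univ_eq_sum_range
      (fun j => f (d j) / ∏ k ∈ (Finset.range (n+1)).erase j, (d j - d k)) (n+1)]
  apply Finset.sum_congr rfl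
  intro j _
  have hbj : d (j:ℕ) = b j := by rw [h (j:ℕ) j.isLt]
  rw [← hbj]
  congr 1
  refine Finset.prod_bij (fun (k : Fin (n+1)) _ => (k : ℕ)) ?_ ?_ ?_ ?_
  · intro k hk
    rw [Finset.mem_erase] at hk ⊢
    exact ⟨fun hv => hk.1 (Fin.ext hv), Finset.mem_range.mpr k.isLt⟩
  · intro k1 _ k2 _ hv
    exact Fin.ext hv
  · intro x hx
    rw [Finset.mem_erase, Finset.mem_range] at hx
    refine ⟨⟨x, hx.2⟩, ?_, rfl⟩
    rw [Finset.mem_erase]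
    exact ⟨fun hc => hx.1 (by rw [← hc]), Finset.mem_univ _⟩
  · intro k _
    rw [h (k:ℕ) k.isLt]

lemma append_apply (k₁ m : ℕ) (a : Fin (m+1) → ℝ) (i : ℕ) (hi : i < k₁ + (m+1)) :
    Fin.append (fun _ : Fin k₁ => a 0) a ⟨i, hi⟩
      = if h : i < k₁ then a 0 else a ⟨i - k₁, by omega⟩ := by
  by_cases h : i < k₁
  · rw [dif_pos h]
    have he : (⟨i, hi⟩ : Fin (k₁ + (m+1))) = Fin.castAdd (m+1) ⟨i, h⟩ := Fin.ext rfl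
    rw [he, Fin.append_left]
  · rw [dif_neg h]
    have he : (⟨i, hi⟩ : Fin (k₁ + (m+1))) = Fin.natAdd k₁ ⟨i - k₁, by omega⟩ :=
      Fin.ext (by simp [Fin.natAdd]; omega)
    rw [he, Fin.append_right]

end HGAux

open HGAux

theorem iteratedDeriv_divDiff_eq_repeated (m k₁ : ℕ) (f : ℝ → ℝ)
    (hf : ContDiff ℝ (k₁ + m : ℕ) f) (a : Fin (m + 1) → ℝ) (ha : Function.Injective a) :
    iteratedDeriv k₁ (fun y => divDiff f (Function.update a 0 y)) (a 0)
      = (Nat.factorial k₁ : ℝ) *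
          hgDivDiff f ((Fin.append (fun _ : Fin k₁ => a 0) a : Fin (k₁ + (m + 1)) → ℝ) : Fin (k₁ + m + 1) → ℝ) := by
  have hfact : (Nat.factorial k₁ : ℝ) ≠ 0 := Nat.cast_ne_zero.mpr (Nat.factorial_ne_zero k₁)
  cases m with
  | zero =>
    -- `divDiff` at a single point is just `f`
    have hfun : (fun y => divDiff f (Function.update a 0 y)) = f := by
      funext y
      rw [divDiff]
      rw [Fin.sum_univ_one]
      have h1 : (Finset.univ.erase (0 : Fin 1)) = ∅ := by decide
      rw [h1, Finset.prod_empty, Function.update_self, div_one]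
    rw [hfun]
    -- all points of the append are `a 0`
    have hw : ∀ j : Fin (k₁ + 1), Fin.append (fun _ : Fin k₁ => a 0) a j = a 0 := by
      intro j
      have h2 := append_apply k₁ 0 a (j : ℕ) j.isLt
      have h3 : (⟨(j : ℕ), j.isLt⟩ : Fin (k₁ + 1)) = j := Fin.eta j j.isLt
      rw [h3] at h2
      rw [h2]
      by_cases h : (j : ℕ) < k₁
      · rw [dif_pos h]
      · rw [dif_neg h]
        congr 1
        apply Fin.ext
        have hj := j.isLt
        simp only [Fin.val_zero]
        omega
    have hhg : hgDivDiff f (Fin.append (fun _ : Fin k₁ => a 0) a : Fin (k₁ + 1) → ℝ)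
        = ∫ t in Sx k₁, iteratedDeriv k₁ f (a 0) := by
      rw [show hgDivDiff f (Fin.append (fun _ : Fin k₁ => a 0) a : Fin (k₁ + 1) → ℝ)
        = ∫ t in Sx k₁, iteratedDeriv k₁ f
          ((∑ i, t i * Fin.append (fun _ : Fin k₁ => a 0) a i.castSucc)
            + (1 - ∑ i, t i) * Fin.append (fun _ : Fin k₁ => a 0) a (Fin.last k₁)) from rfl]
      apply setIntegral_congr_fun (measurableSet_Sx _)
      intro t _
      congr 1
      simp_rw [hw]
      rw [← Finset.sum_mul]
      ring
    rw [hhg, setIntegral_const]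
    have hvol : (volume (Sx k₁)).toReal = ((k₁.factorial : ℝ))⁻¹ := by
      have h4 := vol_Sx k₁
      rwa [setIntegral_const, smul_eq_mul, mul_one] at h4
    rw [Measure.real, hvol, smul_eq_mul]
    field_simp
  | succ m' =>
    set dnat : ℕ → ℝ := fun i => if h : i < m'+2 then a ⟨i, h⟩ else a 0 with hdnat
    have hdnat_lt : ∀ i : ℕ, (hi : i < m'+2) → dnat i = a ⟨i, hi⟩ := by
      intro i hi
      simp only [hdnat]
      rw [dif_pos hi]
    have MAIN : ∀ k : ℕ, k ≤ k₁ → ∀ y : ℝ, (∀ i : Fin (m'+2), i ≠ 0 → y ≠ a i) →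
        iteratedDeriv k (fun y => divDiff f (Function.update a 0 y)) y
          = ∫ t in Sx (m'+1), (t 0)^k *
              iteratedDeriv (k + (m'+1)) f (Xp (m'+1) (Function.update dnat 0 y) t) := by
      intro k
      induction k with
      | zero =>
        intro _ y hy
        rw [iteratedDeriv_zero]
        have hbridge : ∀ i : ℕ, (hi : i < m'+1+1) → Function.update dnat 0 y i
            = Function.update a 0 y ⟨i, hi⟩ := by
          intro i hi
          rcases Nat.eq_zero_or_pos i with rfl | hpos
          · rw [Function.update_self, Fin.mk_zero, Function.update_self]
          · have hne : i ≠ 0 := by omega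
            have hne' : (⟨i, hi⟩ : Fin (m'+2)) ≠ 0 := by
              intro hc
              exact hne (by simpa using congrArg Fin.val hc)
            rw [Function.update_of_ne hne, Function.update_of_ne hne', hdnat_lt i hi]
        have h1 : divDiff f (Function.update a 0 y) = DD f (m'+1) (Function.update dnat 0 y) :=
          dd_eq (m'+1) f _ _ hbridge
        have hinj : ∀ i ≤ m'+1, ∀ j ≤ m'+1,
            Function.update dnat 0 y i = Function.update dnat 0 y j → i = j := by
          intro i hi j hj hij
          rcases Nat.eq_zero_or_pos i with rfl | hipos <;>
            rcases Nat.eq_zero_or_pos j with rfl | hjpos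
          · rfl
          · exfalso
            rw [Function.update_self, Function.update_of_ne (by omega),
              hdnat_lt j (by omega)] at hij
            have hjne : (⟨j, by omega⟩ : Fin (m'+2)) ≠ 0 := by
              intro hc
              have h9 := congrArg Fin.val hc
              simp only [Fin.val_zero] at h9
              omega
            exact hy ⟨j, by omega⟩ hjne hij
          · exfalso
            rw [Function.update_self, Function.update_of_ne (by omega),
              hdnat_lt i (by omega)] at hij
            have hine : (⟨i, by omega⟩ : Fin (m'+2)) ≠ 0 := by
              intro hc
              have h9 := congrArg Fin.val hc
              simp only [Fin.val_zero] at h9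
              omega
            exact hy ⟨i, by omega⟩ hine hij.symm
          · rw [Function.update_of_ne (by omega), Function.update_of_ne (by omega),
              hdnat_lt i (by omega), hdnat_lt j (by omega)] at hij
            have := ha hij
            simpa using congrArg Fin.val this
        have h2 := HG (m'+1) f (Function.update dnat 0 y)
          (hf.of_le (by exact_mod_cast (by omega : m'+1 ≤ k₁ + (m'+1)))) hinj
        rw [h1, ← h2, Ig]
        apply setIntegral_congr_fun (measurableSet_Sx _)
        intro t _
        simp only [pow_zero, one_mul, Nat.zero_add]
      | succ k ih =>
        intro hk y hy
        rw [iteratedDeriv_succ]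
        set U : Set ℝ := ⋂ i : Fin (m'+2), {y : ℝ | i ≠ 0 → y ≠ a i} with hUdef
        have hUopen : IsOpen U := by
          apply isOpen_iInter_of_finite
          intro i
          by_cases h : i = 0
          · have : {y : ℝ | i ≠ 0 → y ≠ a i} = Set.univ := by
              ext z; simp [h]
            rw [this]; exact isOpen_univ
          · have : {y : ℝ | i ≠ 0 → y ≠ a i} = {a i}ᶜ := by
              ext z; simp [h]
            rw [this]; exact isOpen_compl_singleton
        have hyU : y ∈ U := Set.mem_iInter.mpr (fun i => hy i)
        have hev : (iteratedDeriv k (fun y => divDiff f (Function.update a 0 y)))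
            =ᶠ[nhds y] (fun z => ∫ t in Sx (m'+1), (t 0)^k *
              iteratedDeriv (k + (m'+1)) f (Xp (m'+1) (Function.update dnat 0 z) t)) := by
          filter_upwards [hUopen.mem_nhds hyU] with z hz
          exact ih (by omega) z (fun i hi0 => Set.mem_iInter.mp hz i hi0)
        rw [hev.deriv_eq]
        have hle : ((k + (m'+1) + 1 : ℕ) : WithTop ℕ∞) ≤ ((k₁ + (m'+1) : ℕ) : WithTop ℕ∞) := by
          exact_mod_cast (by omega : k + (m'+1) + 1 ≤ k₁ + (m'+1))
        have hder : ∀ x : ℝ, HasDerivAt (iteratedDeriv (k + (m'+1)) f)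
            (iteratedDeriv (k + (m'+1) + 1) f x) x := by
          intro x
          have hdiff := ((hf.of_le hle).differentiable_iteratedDeriv (k + (m'+1))
            (by exact_mod_cast Nat.lt_succ_self (k + (m'+1)))).differentiableAt (x := x)
          have h5 := hdiff.hasDerivAt
          rwa [← iteratedDeriv_succ] at h5
        have hF' : Continuous (iteratedDeriv (k + (m'+1) + 1) f) :=
          hf.continuous_iteratedDeriv _ hle
        have hW := hasDerivAt_W m' k (iteratedDeriv (k + (m'+1)) f)
          (iteratedDeriv (k + (m'+1) + 1) f) hF' hder dnat y
        rw [show k + 1 + (m'+1) = k + (m'+1) + 1 from by omega]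
        exact hW.deriv
    have hU0 : ∀ i : Fin (m'+2), i ≠ 0 → a 0 ≠ a i := by
      intro i hi hc
      exact hi (ha hc).symm
    rw [MAIN k₁ le_rfl (a 0) hU0]
    -- now handle the right-hand side
    set wnat : ℕ → ℝ := fun i => if i < k₁ then a 0 else dnat (i - k₁) with hwnat
    have hbr : ∀ i : ℕ, (hi : i < (k₁ + (m'+1)) + 1) →
        wnat i = ((Fin.append (fun _ : Fin k₁ => a 0) a : Fin (k₁ + (m'+1+1)) → ℝ)) ⟨i, hi⟩ := by
      intro i hi
      have h6 := append_apply k₁ (m'+1) a i hi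
      rw [h6]
      simp only [hwnat]
      by_cases h : i < k₁
      · rw [if_pos h, dif_pos h]
      · rw [if_neg h, dif_neg h, hdnat_lt (i - k₁) (by omega)]
    have hRHS := hg_eq (k₁ + (m'+1)) f
      ((Fin.append (fun _ : Fin k₁ => a 0) a : Fin (k₁ + (m'+1+1)) → ℝ)) wnat hbr
    rw [hRHS]
    set F := iteratedDeriv (k₁ + (m'+1)) f with hF
    have hFc : Continuous F := hf.continuous_iteratedDeriv _ le_rfl
    have hR0 : R F 0 (k₁ + m') wnat
        = ∫ t in Sx (k₁ + (m'+1)), F (Xp (k₁ + (m'+1)) wnat t) := by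
      rw [R]
      apply setIntegral_congr_fun (measurableSet_Sx _)
      intro t _
      dsimp only
      rw [pow_zero, one_mul]
      rfl
    rw [← hR0]
    have hwconst : ∀ i ≤ k₁, wnat i = wnat 0 := by
      intro i hi
      simp only [hwnat]
      by_cases h0 : 0 < k₁
      · rw [if_pos h0]
        by_cases h : i < k₁
        · rw [if_pos h]
        · rw [if_neg h]
          have : i - k₁ = 0 := by omega
          rw [this, hdnat_lt 0 (by omega), Fin.mk_zero]
      · have hk0 : k₁ = 0 := by omega
        have hi0 : i = 0 := by omega
        rw [hi0]
    have hGM := GM_iter F hFc k₁ 0 m' wnat hwconst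
    simp only [Nat.cast_zero, Nat.zero_add] at hGM
    rw [hGM, prod_range_one_add]
    have hshift : ∀ t : Fin (m'+1) → ℝ,
        Xp (m'+1) (fun i => wnat (i + k₁)) t
          = Xp (m'+1) (Function.update dnat 0 (a 0)) t := by
      intro t
      apply Xp_congr
      intro i hi
      simp only [hwnat]
      rw [if_neg (by omega : ¬ i + k₁ < k₁)]
      have h7 : i + k₁ - k₁ = i := by omega
      rw [h7]
      rcases Nat.eq_zero_or_pos i with rfl | hpos
      · rw [Function.update_self, hdnat_lt 0 (by omega), Fin.mk_zero]
      · rw [Function.update_of_ne (by omega)]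
    have hQ : R F k₁ m' (fun i => wnat (i + k₁))
        = ∫ t in Sx (m'+1), (t 0)^k₁ * F (Xp (m'+1) (Function.update dnat 0 (a 0)) t) := by
      rw [R]
      apply setIntegral_congr_fun (measurableSet_Sx _)
      intro t _
      dsimp only
      rw [hshift t]
    rw [hQ]
    field_simp
end

section
/- For pairwise distinct points a_1, ..., a_m, sufficiently smooth f, and nonnegative integers k_1, ..., k_m with k = k_1 + ... + k_m, the mixed partial derivative ∂^k/(∂a_1^{k_1} ... ∂a_m^{k_m}) of the Lagrange form ∑_{i=1}^m f(a_i) ∏_{q ≠ i} (a_i - a_q)^{-1} equals ∑_{i=1}^m k_i! ∑_{r_1+...+r_m = k_i, r_j ≥ 0} (f^{(r_i)}(a_i) (-1)^{k_i - r_i}/r_i!) ∏_{q ≠ i} ((k_q + r_q)! / ((a_i - a_q)^{k_q + r_q + 1} r_q!)). -/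
/-- `n`-th partial derivative in the `i`-th coordinate. -/
noncomputable def pderivN {m : ℕ} (i : Fin m) (n : ℕ) (F : (Fin m → ℝ) → ℝ) :
    (Fin m → ℝ) → ℝ :=
  fun a => iteratedDeriv n (fun y => F (Function.update a i y)) (a i)

/-- Mixed partial derivative `∂^{k 0}/∂a_0^{k 0} ⋯ ∂^{k (m-1)}/∂a_{m-1}^{k (m-1)}`. -/
noncomputable def mixedPartial {m : ℕ} (k : Fin m → ℕ) (F : (Fin m → ℝ) → ℝ) :
    (Fin m → ℝ) → ℝ :=
  (List.finRange m).foldr (fun i G => pderivN i (k i) G) F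

open Finset Topology Set

section helpers

variable {u : Set ℝ} {x : ℝ} {n : ℕ}

lemma iteratedDerivWithin_of_isOpen' (f : ℝ → ℝ) (hu : IsOpen u) (hx : x ∈ u) (n : ℕ) :
    iteratedDerivWithin n f u x = iteratedDeriv n f x := by
  simp only [iteratedDerivWithin, iteratedDeriv, iteratedFDerivWithin_of_isOpen n hu hx]

lemma iteratedDeriv_fun_add_aux {f g : ℝ → ℝ} (hu : IsOpen u) (hx : x ∈ u)
    (hf : ContDiffOn ℝ n f u) (hg : ContDiffOn ℝ n g u) :
    iteratedDeriv n (fun y => f y + g y) x = iteratedDeriv n f x + iteratedDeriv n g x := by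
  rw [← iteratedDerivWithin_of_isOpen' _ hu hx, ← iteratedDerivWithin_of_isOpen' f hu hx,
    ← iteratedDerivWithin_of_isOpen' g hu hx]
  exact iteratedDerivWithin_add hx hu.uniqueDiffOn (hf x hx) (hg x hx)

lemma iteratedDeriv_fun_const_mul {f : ℝ → ℝ} (c : ℝ) (hu : IsOpen u) (hx : x ∈ u)
    (hf : ContDiffOn ℝ n f u) :
    iteratedDeriv n (fun y => c * f y) x = c * iteratedDeriv n f x := by
  rw [← iteratedDerivWithin_of_isOpen' _ hu hx, ← iteratedDerivWithin_of_isOpen' f hu hx]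
  exact iteratedDerivWithin_const_mul hx hu.uniqueDiffOn c (hf x hx)

lemma iteratedDeriv_fun_sum_aux {ι : Type*} (s : Finset ι) {F : ι → ℝ → ℝ} (hu : IsOpen u) (hx : x ∈ u)
    (hF : ∀ i ∈ s, ContDiffOn ℝ n (F i) u) :
    iteratedDeriv n (fun y => ∑ i ∈ s, F i y) x = ∑ i ∈ s, iteratedDeriv n (F i) x := by
  classical
  induction s using Finset.induction with
  | empty =>
    simp only [Finset.sum_empty]
    have : (fun _ : ℝ => (0:ℝ)) = fun y => (0:ℝ) * 0 := by funext; ring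
    rw [this, iteratedDeriv_fun_const_mul 0 hu hx contDiffOn_const]
    ring
  | insert a s' hi ih =>
    simp only [Finset.sum_insert hi]
    rw [iteratedDeriv_fun_add_aux hu hx (hF a (mem_insert_self a s'))
      (ContDiffOn.sum fun i hi' => hF i (mem_insert_of_mem hi')), ih
      (fun i hi' => hF i (mem_insert_of_mem hi'))]

end helpers

section invpow

variable {x c : ℝ} {p n : ℕ}

lemma contDiffOn_invp1 (c : ℝ) (p : ℕ) (n : ℕ) :
    ContDiffOn ℝ n (fun y : ℝ => ((y - c) ^ (p+1))⁻¹) {c}ᶜ :=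
  (((contDiff_id.sub contDiff_const).pow (p+1)).contDiffOn).inv
    fun y hy => pow_ne_zero _ (sub_ne_zero.mpr hy)

lemma contDiffOn_invp2 (c : ℝ) (p : ℕ) (n : ℕ) :
    ContDiffOn ℝ n (fun y : ℝ => ((c - y) ^ (p+1))⁻¹) {c}ᶜ :=
  (((contDiff_const.sub contDiff_id).pow (p+1)).contDiffOn).inv
    fun y hy => pow_ne_zero _ (sub_ne_zero.mpr (fun h => hy h.symm))

lemma deriv_invp1 (hx : x ≠ c) :
    deriv (fun y : ℝ => ((y - c) ^ (p+1))⁻¹) x = -((p:ℝ)+1) * ((x - c) ^ (p+2))⁻¹ := by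
  have h1 : HasDerivAt (fun y : ℝ => y - c) 1 x := (hasDerivAt_id x).sub_const c
  have h2 : HasDerivAt (fun y : ℝ => (y - c) ^ (p+1))
      ((((p:ℝ)+1) * (x - c) ^ p) * 1) x := by
    have := (hasDerivAt_pow (p+1) (x - c)).comp x h1
    simpa [Function.comp_def] using this
  have hne : (x - c) ≠ 0 := sub_ne_zero.mpr hx
  have h3 := h2.inv (pow_ne_zero (p+1) hne)
  rw [show (fun y : ℝ => ((y - c) ^ (p+1))⁻¹) = (fun y : ℝ => (y - c) ^ (p+1))⁻¹ from rfl, h3.deriv]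
  have hne2 : (x - c) ^ (p+2) ≠ 0 := pow_ne_zero _ hne
  field_simp
  ring

lemma deriv_invp2 (hx : x ≠ c) :
    deriv (fun y : ℝ => ((c - y) ^ (p+1))⁻¹) x = ((p:ℝ)+1) * ((c - x) ^ (p+2))⁻¹ := by
  have h1 : HasDerivAt (fun y : ℝ => c - y) (-1) x := (hasDerivAt_id x).const_sub c
  have h2 : HasDerivAt (fun y : ℝ => (c - y) ^ (p+1))
      ((((p:ℝ)+1) * (c - x) ^ p) * (-1)) x := by
    have := (hasDerivAt_pow (p+1) (c - x)).comp x h1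
    simpa [Function.comp_def] using this
  have hne : (c - x) ≠ 0 := sub_ne_zero.mpr fun h => hx h.symm
  have h3 := h2.inv (pow_ne_zero (p+1) hne)
  rw [show (fun y : ℝ => ((c - y) ^ (p+1))⁻¹) = (fun y : ℝ => (c - y) ^ (p+1))⁻¹ from rfl, h3.deriv]
  have hne2 : (c - x) ^ (p+2) ≠ 0 := pow_ne_zero _ hne
  field_simp
  ring

lemma fact_ratio (p n : ℕ) :
    ((p+n+1).factorial : ℝ) / (p.factorial : ℝ)
      = ((p:ℝ)+1) * (((p+1+n).factorial : ℝ) / ((p+1).factorial : ℝ)) := by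
  have h1 : (p.factorial : ℝ) ≠ 0 := Nat.cast_ne_zero.mpr p.factorial_ne_zero
  have h2 : ((p+1).factorial : ℝ) ≠ 0 := Nat.cast_ne_zero.mpr (p+1).factorial_ne_zero
  field_simp
  have : p + n + 1 = p + 1 + n := by ring
  rw [this, Nat.factorial_succ p]
  push_cast
  ring

lemma iteratedDeriv_invp1 (c : ℝ) (p n : ℕ) :
    ∀ x, x ≠ c → iteratedDeriv n (fun y : ℝ => ((y - c) ^ (p+1))⁻¹) x
      = (-1:ℝ)^n * (((p+n).factorial : ℝ) / (p.factorial : ℝ)) * ((x - c) ^ (p+n+1))⁻¹ := by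
  induction n generalizing p with
  | zero =>
    intro x hx
    simp [div_self (Nat.cast_ne_zero.mpr p.factorial_ne_zero : (p.factorial:ℝ) ≠ 0)]
  | succ n ih =>
    intro x hx
    rw [iteratedDeriv_succ']
    have hEq : Set.EqOn (deriv (fun y : ℝ => ((y - c) ^ (p+1))⁻¹))
        (fun y => -((p:ℝ)+1) * ((y - c) ^ (p+1+1))⁻¹) ({c}ᶜ : Set ℝ) := by
      intro y hy
      exact deriv_invp1 hy
    rw [hEq.iteratedDeriv_of_isOpen isOpen_compl_singleton n hx,
      iteratedDeriv_fun_const_mul _ isOpen_compl_singleton hx (contDiffOn_invp1 c (p+1) n),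
      ih (p+1) x hx]
    have : p + n + 1 = p + (n+1) := by ring
    rw [← this, fact_ratio p n]
    have : p + 1 + n + 1 = p + (n + 1) + 1 := by ring
    rw [this]
    ring

lemma iteratedDeriv_invp2 (c : ℝ) (p n : ℕ) :
    ∀ x, x ≠ c → iteratedDeriv n (fun y : ℝ => ((c - y) ^ (p+1))⁻¹) x
      = (((p+n).factorial : ℝ) / (p.factorial : ℝ)) * ((c - x) ^ (p+n+1))⁻¹ := by
  induction n generalizing p with
  | zero =>
    intro x hx
    simp [div_self (Nat.cast_ne_zero.mpr p.factorial_ne_zero : (p.factorial:ℝ) ≠ 0)]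
  | succ n ih =>
    intro x hx
    rw [iteratedDeriv_succ']
    have hEq : Set.EqOn (deriv (fun y : ℝ => ((c - y) ^ (p+1))⁻¹))
        (fun y => ((p:ℝ)+1) * ((c - y) ^ (p+1+1))⁻¹) ({c}ᶜ : Set ℝ) := by
      intro y hy
      exact deriv_invp2 hy
    rw [hEq.iteratedDeriv_of_isOpen isOpen_compl_singleton n hx,
      iteratedDeriv_fun_const_mul _ isOpen_compl_singleton hx (contDiffOn_invp2 c (p+1) n),
      ih (p+1) x hx]
    have : p + n + 1 = p + (n+1) := by ring
    rw [← this, fact_ratio p n]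
    have : p + 1 + n + 1 = p + (n + 1) + 1 := by ring
    rw [this]
    ring

end invpow

section leibniz

lemma pascal_sum (n : ℕ) (B C : ℕ → ℝ) :
    (∑ i ∈ Finset.range (n+1), (n.choose i : ℝ) * (B (i+1) * C (n-i)))
      + (∑ i ∈ Finset.range (n+1), (n.choose i : ℝ) * (B i * C (n-i+1)))
    = ∑ i ∈ Finset.range (n+2), ((n+1).choose i : ℝ) * (B i * C (n+1-i)) := by
  rw [Finset.sum_range_succ' (fun i => (((n+1).choose i : ℝ)) * (B i * C (n+1-i))) (n+1)]
  have h1 : ∑ i ∈ Finset.range (n+1), (((n+1).choose (i+1) : ℝ)) * (B (i+1) * C (n+1-(i+1)))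
      = ∑ i ∈ Finset.range (n+1), ((n.choose i : ℝ) * (B (i+1) * C (n-i))
        + (n.choose (i+1) : ℝ) * (B (i+1) * C (n-i))) := by
    refine Finset.sum_congr rfl fun i _ => ?_
    have : n + 1 - (i + 1) = n - i := by omega
    rw [this, Nat.choose_succ_succ]
    push_cast
    ring
  rw [h1, Finset.sum_add_distrib]
  have h2 : ∑ i ∈ Finset.range (n+1), (n.choose i : ℝ) * (B i * C (n-i+1))
      = (∑ i ∈ Finset.range n, (n.choose (i+1) : ℝ) * (B (i+1) * C (n-(i+1)+1)))
        + (n.choose 0 : ℝ) * (B 0 * C (n-0+1)) :=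
    Finset.sum_range_succ' _ n
  have h3 : ∑ i ∈ Finset.range (n+1), (n.choose (i+1) : ℝ) * (B (i+1) * C (n-i))
      = (∑ i ∈ Finset.range n, (n.choose (i+1) : ℝ) * (B (i+1) * C (n-i)))
        + (n.choose (n+1) : ℝ) * (B (n+1) * C (n-n)) := Finset.sum_range_succ _ n
  have h4 : ∀ i ∈ Finset.range n, (n.choose (i+1) : ℝ) * (B (i+1) * C (n-(i+1)+1))
      = (n.choose (i+1) : ℝ) * (B (i+1) * C (n-i)) := by
    intro i hi
    rw [Finset.mem_range] at hi
    have : n - (i+1) + 1 = n - i := by omega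
    rw [this]
  rw [h2, Finset.sum_congr rfl h4, h3, Nat.choose_succ_self]
  simp
  ring

lemma leibniz_two {u : Set ℝ} (hu : IsOpen u) :
    ∀ (n : ℕ) (f g : ℝ → ℝ), ContDiffOn ℝ n f u → ContDiffOn ℝ n g u → ∀ x ∈ u,
      iteratedDeriv n (fun y => f y * g y) x
        = ∑ i ∈ Finset.range (n+1),
            (n.choose i : ℝ) * (iteratedDeriv i f x * iteratedDeriv (n-i) g x) := by
  intro n
  induction n with
  | zero => intro f g hf hg x hx; simp
  | succ n ih =>
    intro f g hf hg x hx
    have hone : (1 : WithTop ℕ∞) ≤ ((n+1 : ℕ) : WithTop ℕ∞) := by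
      exact_mod_cast Nat.succ_le_succ n.zero_le
    have hnle : ((n : ℕ) : WithTop ℕ∞) ≤ ((n+1 : ℕ) : WithTop ℕ∞) := by
      exact_mod_cast n.le_succ
    have hdf : ContDiffOn ℝ n (deriv f) u := hf.deriv_of_isOpen hu (by exact_mod_cast le_refl _)
    have hdg : ContDiffOn ℝ n (deriv g) u := hg.deriv_of_isOpen hu (by exact_mod_cast le_refl _)
    have hf' : ContDiffOn ℝ n f u := hf.of_le hnle
    have hg' : ContDiffOn ℝ n g u := hg.of_le hnle
    have hEq : Set.EqOn (deriv (fun y => f y * g y))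
        (fun y => deriv f y * g y + f y * deriv g y) u := by
      intro y hy
      exact deriv_fun_mul ((hf.differentiableOn (by exact_mod_cast Nat.succ_ne_zero n)).differentiableAt (hu.mem_nhds hy))
        ((hg.differentiableOn (by exact_mod_cast Nat.succ_ne_zero n)).differentiableAt (hu.mem_nhds hy))
    rw [iteratedDeriv_succ', hEq.iteratedDeriv_of_isOpen hu n hx,
      iteratedDeriv_fun_add_aux hu hx (hdf.mul hg') (hf'.mul hdg),
      ih (deriv f) g hdf hg' x hx, ih f (deriv g) hf' hdg x hx]
    have e1 : ∀ i, iteratedDeriv i (deriv f) x = iteratedDeriv (i+1) f x := by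
      intro i; rw [iteratedDeriv_succ']
    have e2 : ∀ i, iteratedDeriv i (deriv g) x = iteratedDeriv (i+1) g x := by
      intro i; rw [iteratedDeriv_succ']
    simp only [e1, e2]
    have := pascal_sum n (fun i => iteratedDeriv i f x) (fun j => iteratedDeriv j g x)
    simpa using this

end leibniz

section prodleibniz

lemma iteratedDeriv_fun_const (c : ℝ) (n : ℕ) (x : ℝ) :
    iteratedDeriv n (fun _ : ℝ => c) x = if n = 0 then c else 0 := by
  induction n generalizing c x with
  | zero => simp
  | succ n ih =>
    rw [iteratedDeriv_succ']
    have : deriv (fun _ : ℝ => c) = fun _ : ℝ => (0:ℝ) := by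
      funext y; exact deriv_const y c
    rw [this, ih 0 x]
    simp

lemma contDiffOn_finprod {ι : Type*} {u : Set ℝ} {n : ℕ} (s : Finset ι) {F : ι → ℝ → ℝ}
    (hF : ∀ i ∈ s, ContDiffOn ℝ n (F i) u) :
    ContDiffOn ℝ n (fun y => ∏ i ∈ s, F i y) u := by
  classical
  induction s using Finset.induction with
  | empty => simpa using contDiffOn_const
  | insert a s' hi ih =>
    simp only [Finset.prod_insert hi]
    exact (hF a (Finset.mem_insert_self a s')).mul
      (ih fun i hi' => hF i (Finset.mem_insert_of_mem hi'))

lemma sum_antidiagonalTuple_succ {M n : ℕ} (h : (Fin (M+1) → ℕ) → ℝ) :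
    ∑ r ∈ Finset.Nat.antidiagonalTuple (M+1) n, h r
      = ∑ i ∈ Finset.range (n+1), ∑ r' ∈ Finset.Nat.antidiagonalTuple M (n - i),
          h (Fin.cons i r') := by
  rw [Finset.sum_sigma']
  refine Finset.sum_nbij' (fun r => ⟨r 0, Fin.tail r⟩) (fun x => Fin.cons x.1 x.2) ?_ ?_ ?_ ?_ ?_
  · intro r hr
    rw [Finset.Nat.mem_antidiagonalTuple, Fin.sum_univ_succ] at hr
    rw [Finset.mem_sigma, Finset.mem_range, Finset.Nat.mem_antidiagonalTuple]
    have hS : ∑ i : Fin M, Fin.tail r i = ∑ i : Fin M, r i.succ := rfl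
    dsimp only
    constructor
    · omega
    · rw [hS]; omega
  · rintro ⟨i, r'⟩ hx
    rw [Finset.mem_sigma, Finset.mem_range, Finset.Nat.mem_antidiagonalTuple] at hx
    rw [Finset.Nat.mem_antidiagonalTuple, Fin.sum_cons, hx.2]
    omega
  · intro r _
    exact Fin.cons_self_tail r
  · rintro ⟨i, r'⟩ _
    simp [Fin.tail_cons]
  · intro r _
    rw [Fin.cons_self_tail]

lemma choose_cast_eq {i n : ℕ} (h : i ≤ n) :
    (n.choose i : ℝ) * ((n-i).factorial : ℝ) = (n.factorial : ℝ) / (i.factorial : ℝ) := by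
  have h1 : (i.factorial : ℝ) ≠ 0 := Nat.cast_ne_zero.mpr i.factorial_ne_zero
  rw [eq_div_iff h1]
  exact_mod_cast congrArg (Nat.cast : ℕ → ℝ)
    (by rw [mul_right_comm]; exact Nat.choose_mul_factorial_mul_factorial h)

lemma leibniz_prod {u : Set ℝ} (hu : IsOpen u) :
    ∀ (M : ℕ) (g : Fin M → ℝ → ℝ) (n : ℕ), (∀ q, ContDiffOn ℝ n (g q) u) → ∀ x ∈ u,
      iteratedDeriv n (fun y => ∏ q, g q y) x
        = (n.factorial : ℝ) * ∑ r ∈ Finset.Nat.antidiagonalTuple M n,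
            ∏ q, iteratedDeriv (r q) (g q) x / ((r q).factorial : ℝ) := by
  intro M
  induction M with
  | zero =>
    intro g n hg x hx
    simp only [Finset.univ_eq_empty, Finset.prod_empty]
    rw [iteratedDeriv_fun_const 1 n x]
    cases n with
    | zero => simp
    | succ n => simp
  | succ M ih =>
    intro g n hg x hx
    have hsplit : (fun y => ∏ q : Fin (M+1), g q y)
        = fun y => g 0 y * ∏ q : Fin M, g q.succ y := by
      funext y; exact Fin.prod_univ_succ _
    have hprod : ContDiffOn ℝ n (fun y => ∏ q : Fin M, g q.succ y) u :=
      contDiffOn_finprod Finset.univ fun q _ => hg q.succ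
    rw [hsplit, leibniz_two hu n (g 0) _ (hg 0) hprod x hx]
    have hIH : ∀ i, iteratedDeriv (n-i) (fun y => ∏ q : Fin M, g q.succ y) x
        = ((n-i).factorial : ℝ) * ∑ r' ∈ Finset.Nat.antidiagonalTuple M (n-i),
            ∏ q, iteratedDeriv (r' q) (g q.succ) x / ((r' q).factorial : ℝ) := by
      intro i
      exact ih (fun q => g q.succ) (n-i)
        (fun q => (hg q.succ).of_le (by exact_mod_cast Nat.sub_le n i)) x hx
    simp only [hIH]
    have hres := sum_antidiagonalTuple_succ (M := M) (n := n)
      (fun r => ∏ q : Fin (M+1), iteratedDeriv (r q) (g q) x / ((r q).factorial : ℝ))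
    rw [hres, Finset.mul_sum]
    apply Finset.sum_congr rfl
    intro i hi
    rw [Finset.mem_range] at hi
    simp only [Finset.mul_sum]
    apply Finset.sum_congr rfl
    intro r' _
    simp only [Fin.prod_univ_succ, Fin.cons_zero, Fin.cons_succ]
    have key : ((n.choose i : ℕ) : ℝ) * (i.factorial : ℝ) * ((n - i).factorial : ℝ)
        = (n.factorial : ℝ) := by
      exact_mod_cast congrArg (Nat.cast (R := ℝ))
        (Nat.choose_mul_factorial_mul_factorial (by omega : i ≤ n))
    have hi' : (i.factorial : ℝ) ≠ 0 := Nat.cast_ne_zero.mpr i.factorial_ne_zero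
    rw [← key]
    field_simp
end prodleibniz

section stepterms

lemma isOpen_avoid {m : ℕ} (b : Fin m → ℝ) (t : Fin m) :
    IsOpen {y : ℝ | ∀ q, q ≠ t → y ≠ b q} := by
  have h : {y : ℝ | ∀ q, q ≠ t → y ≠ b q} = ⋂ q : Fin m, {y : ℝ | q ≠ t → y ≠ b q} := by
    ext y; simp [Set.mem_iInter]
  rw [h]
  refine isOpen_iInter_of_finite fun q => ?_
  by_cases hq : q = t
  · convert isOpen_univ using 1
    ext y; simp [hq]
  · have : {y : ℝ | q ≠ t → y ≠ b q} = {b q}ᶜ := by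
      ext y; simp [hq]
    rw [this]; exact isOpen_compl_singleton

lemma mem_avoid {m : ℕ} {b : Fin m → ℝ} (hb : Function.Injective b) (t : Fin m) :
    b t ∈ {y : ℝ | ∀ q, q ≠ t → y ≠ b q} := by
  intro q hq h
  exact hq (hb h.symm)

lemma avoid_subset {m : ℕ} (b : Fin m → ℝ) {t q : Fin m} (hq : q ≠ t) :
    {y : ℝ | ∀ q, q ≠ t → y ≠ b q} ⊆ ({b q}ᶜ : Set ℝ) := fun y hy => hy q hq

lemma neg_one_pow_prod {m : ℕ} (t : Fin m) (r : Fin m → ℕ) {n : ℕ}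
    (hr : r ∈ Finset.Nat.antidiagonalTuple m n) :
    ∏ q ∈ Finset.univ.erase t, ((-1 : ℝ)) ^ (r q) = (-1 : ℝ) ^ (n - r t) := by
  rw [Finset.prod_pow_eq_pow_sum]
  congr 1
  rw [Finset.Nat.mem_antidiagonalTuple] at hr
  have := Finset.sum_erase_add Finset.univ r (Finset.mem_univ t)
  omega

lemma step_term_t (f : ℝ → ℝ) {m N : ℕ} (hf : ContDiff ℝ N f) (κ : Fin m → ℕ) (t : Fin m)
    (n : ℕ) (hn : n ≤ N) {b : Fin m → ℝ} (hb : Function.Injective b) :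
    iteratedDeriv n
      (fun y => f y * ∏ q ∈ Finset.univ.erase t,
        (((κ q).factorial : ℝ) / ((y - b q) ^ (κ q + 1)))) (b t)
    = (n.factorial : ℝ) * ∑ r ∈ Finset.Nat.antidiagonalTuple m n,
        (iteratedDeriv (r t) f (b t) * (-1:ℝ)^(n - r t) / ((r t).factorial : ℝ)) *
          ∏ q ∈ Finset.univ.erase t,
            (((κ q + r q).factorial : ℝ)
              / ((b t - b q)^(κ q + r q + 1) * ((r q).factorial : ℝ))) := by
  classical
  set u := {y : ℝ | ∀ q, q ≠ t → y ≠ b q} with hu_def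
  have hu : IsOpen u := isOpen_avoid b t
  have hbt : b t ∈ u := mem_avoid hb t
  set g : Fin m → ℝ → ℝ :=
    Function.update (fun q y => ((κ q).factorial : ℝ) * ((y - b q) ^ (κ q + 1))⁻¹) t f with hg_def
  have hgt : g t = f := Function.update_self _ _ _
  have hgq : ∀ q, q ≠ t → g q = fun y => ((κ q).factorial : ℝ) * ((y - b q) ^ (κ q + 1))⁻¹ :=
    fun q hq => Function.update_of_ne hq _ _
  have hfun : (fun y => f y * ∏ q ∈ Finset.univ.erase t,
      (((κ q).factorial : ℝ) / ((y - b q) ^ (κ q + 1)))) = fun y => ∏ q, g q y := by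
    funext y
    rw [← Finset.mul_prod_erase Finset.univ (fun q => g q y) (Finset.mem_univ t), hgt]
    congr 1
    refine Finset.prod_congr rfl fun q hq => ?_
    rw [hgq q (Finset.ne_of_mem_erase hq)]
    rw [div_eq_mul_inv]
  have hcd : ∀ q, ContDiffOn ℝ n (g q) u := by
    intro q
    by_cases hq : q = t
    · subst hq
      rw [hgt]
      exact (hf.of_le (by exact_mod_cast hn)).contDiffOn
    · rw [hgq q hq]
      exact contDiffOn_const.mul ((contDiffOn_invp1 (b q) (κ q) n).mono (avoid_subset b hq))
  rw [hfun, leibniz_prod hu m g n hcd (b t) hbt]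
  congr 1
  refine Finset.sum_congr rfl fun r hr => ?_
  rw [← Finset.mul_prod_erase Finset.univ
    (fun q => iteratedDeriv (r q) (g q) (b t) / ((r q).factorial : ℝ)) (Finset.mem_univ t), hgt]
  have hfac : ∀ q ∈ Finset.univ.erase t,
      iteratedDeriv (r q) (g q) (b t) / ((r q).factorial : ℝ)
        = ((-1:ℝ)) ^ (r q) * (((κ q + r q).factorial : ℝ)
            / ((b t - b q)^(κ q + r q + 1) * ((r q).factorial : ℝ))) := by
    intro q hq
    have hqt : q ≠ t := Finset.ne_of_mem_erase hq
    have hne : b t ≠ b q := fun h => hqt (hb h.symm)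
    rw [hgq q hqt,
      iteratedDeriv_fun_const_mul _ isOpen_compl_singleton hne (contDiffOn_invp1 (b q) (κ q) _),
      iteratedDeriv_invp1 (b q) (κ q) (r q) (b t) hne]
    have h1 : ((κ q).factorial : ℝ) ≠ 0 := Nat.cast_ne_zero.mpr (κ q).factorial_ne_zero
    have h2 : ((r q).factorial : ℝ) ≠ 0 := Nat.cast_ne_zero.mpr (r q).factorial_ne_zero
    have h3 : (b t - b q) ^ (κ q + r q + 1) ≠ 0 := pow_ne_zero _ (sub_ne_zero.mpr hne)
    field_simp
  rw [Finset.prod_congr rfl hfac, Finset.prod_mul_distrib, neg_one_pow_prod t r hr]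
  ring

end stepterms

section stepother

lemma cancel_aux {c : ℝ} (hc : c ≠ 0) (X : ℝ) : c / (X * c) = X⁻¹ := by
  rw [div_eq_mul_inv, mul_inv, ← mul_assoc, mul_comm c, mul_assoc, mul_inv_cancel₀ hc, mul_one]

lemma step_term_other (f : ℝ → ℝ) {m : ℕ} (κ : Fin m → ℕ) {t i : Fin m} (hit : i ≠ t)
    (hκt : κ t = 0) (n : ℕ) {b : Fin m → ℝ} (hb : Function.Injective b) :
    iteratedDeriv n (fun y => ((κ i).factorial : ℝ) *
        ∑ r ∈ Finset.Nat.antidiagonalTuple m (κ i),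
          (iteratedDeriv (r i) f (b i) * (-1:ℝ)^(κ i - r i) / ((r i).factorial : ℝ)) *
            ∏ q ∈ Finset.univ.erase i,
              (((κ q + r q).factorial : ℝ)
                / ((b i - Function.update b t y q) ^ (κ q + r q + 1) * ((r q).factorial : ℝ))))
      (b t)
    = ((κ i).factorial : ℝ) * ∑ r ∈ Finset.Nat.antidiagonalTuple m (κ i),
        (iteratedDeriv (r i) f (b i) * (-1:ℝ)^(κ i - r i) / ((r i).factorial : ℝ)) *
          ∏ q ∈ Finset.univ.erase i,
            (((Function.update κ t n q + r q).factorial : ℝ)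
              / ((b i - b q) ^ (Function.update κ t n q + r q + 1) * ((r q).factorial : ℝ))) := by
  classical
  set u := {y : ℝ | ∀ q, q ≠ t → y ≠ b q} with hu_def
  have hu : IsOpen u := isOpen_avoid b t
  have hbt : b t ∈ u := mem_avoid hb t
  have htmem : t ∈ Finset.univ.erase i := Finset.mem_erase.mpr ⟨Ne.symm hit, Finset.mem_univ t⟩
  have hbti : b t ≠ b i := fun h => hit (hb h.symm)
  have husub : u ⊆ ({b i}ᶜ : Set ℝ) := avoid_subset b hit
  -- abbreviations
  set C : (Fin m → ℕ) → ℝ := fun r =>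
    iteratedDeriv (r i) f (b i) * (-1:ℝ)^(κ i - r i) / ((r i).factorial : ℝ) with hC
  set D : (Fin m → ℕ) → ℝ := fun r =>
    ∏ q ∈ (Finset.univ.erase i).erase t,
      (((κ q + r q).factorial : ℝ)
        / ((b i - b q) ^ (κ q + r q + 1) * ((r q).factorial : ℝ))) with hD
  have hprod : ∀ (y : ℝ) (r : Fin m → ℕ),
      (∏ q ∈ Finset.univ.erase i,
        (((κ q + r q).factorial : ℝ)
          / ((b i - Function.update b t y q) ^ (κ q + r q + 1) * ((r q).factorial : ℝ))))
      = (((r t).factorial : ℝ) / ((b i - y) ^ (r t + 1) * ((r t).factorial : ℝ))) * D r := by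
    intro y r
    rw [← Finset.mul_prod_erase (Finset.univ.erase i) _ htmem]
    congr 1
    · rw [Function.update_self, hκt, zero_add]
    · refine Finset.prod_congr rfl fun q hq => ?_
      rw [Function.update_of_ne (Finset.ne_of_mem_erase hq)]
  have hEq : (fun y => ((κ i).factorial : ℝ) *
      ∑ r ∈ Finset.Nat.antidiagonalTuple m (κ i),
        (iteratedDeriv (r i) f (b i) * (-1:ℝ)^(κ i - r i) / ((r i).factorial : ℝ)) *
          ∏ q ∈ Finset.univ.erase i,
            (((κ q + r q).factorial : ℝ)
              / ((b i - Function.update b t y q) ^ (κ q + r q + 1) * ((r q).factorial : ℝ))))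
      = fun y => ((κ i).factorial : ℝ) *
        ∑ r ∈ Finset.Nat.antidiagonalTuple m (κ i),
          (C r * D r) * ((b i - y) ^ (r t + 1))⁻¹ := by
    funext y
    congr 1
    refine Finset.sum_congr rfl fun r _ => ?_
    rw [hprod y r,
      cancel_aux (Nat.cast_ne_zero.mpr (r t).factorial_ne_zero : ((r t).factorial:ℝ) ≠ 0)]
    ring
  rw [hEq]
  have hcd : ∀ r ∈ Finset.Nat.antidiagonalTuple m (κ i),
      ContDiffOn ℝ n (fun y => (C r * D r) * ((b i - y) ^ (r t + 1))⁻¹) u :=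
    fun r _ => contDiffOn_const.mul ((contDiffOn_invp2 (b i) (r t) n).mono husub)
  rw [iteratedDeriv_fun_const_mul _ hu hbt (ContDiffOn.sum hcd),
    iteratedDeriv_fun_sum_aux _ hu hbt hcd]
  congr 1
  refine Finset.sum_congr rfl fun r _ => ?_
  rw [iteratedDeriv_fun_const_mul _ isOpen_compl_singleton hbti
      (contDiffOn_invp2 (b i) (r t) n),
    iteratedDeriv_invp2 (b i) (r t) n (b t) hbti]
  have htarget : (∏ q ∈ Finset.univ.erase i,
      (((Function.update κ t n q + r q).factorial : ℝ)
        / ((b i - b q) ^ (Function.update κ t n q + r q + 1) * ((r q).factorial : ℝ))))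
      = (((n + r t).factorial : ℝ)
          / ((b i - b t) ^ (n + r t + 1) * ((r t).factorial : ℝ))) * D r := by
    rw [← Finset.mul_prod_erase (Finset.univ.erase i) _ htmem]
    congr 1
    · rw [Function.update_self]
    · refine Finset.prod_congr rfl fun q hq => ?_
      rw [Function.update_of_ne (Finset.ne_of_mem_erase hq)]
  rw [htarget]
  have hcomm : n + r t = r t + n := Nat.add_comm n (r t)
  rw [hcomm]
  rw [show ((r t + n).factorial:ℝ) / ((b i - b t) ^ (r t + n + 1) * ((r t).factorial:ℝ))
      = (((r t + n).factorial:ℝ) / ((r t).factorial:ℝ)) * ((b i - b t) ^ (r t + n + 1))⁻¹ by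
    rw [div_eq_mul_inv, div_eq_mul_inv, mul_inv]; ring]
  ring

end stepother

section mainpart

noncomputable def Phi (f : ℝ → ℝ) {m : ℕ} (κ : Fin m → ℕ) (b : Fin m → ℝ) : ℝ :=
  ∑ i, (Nat.factorial (κ i) : ℝ) *
    ∑ r ∈ Finset.Nat.antidiagonalTuple m (κ i),
      (iteratedDeriv (r i) f (b i) * (-1 : ℝ) ^ (κ i - r i) / (Nat.factorial (r i) : ℝ)) *
        ∏ q ∈ Finset.univ.erase i,
          ((Nat.factorial (κ q + r q) : ℝ) /
            ((b i - b q) ^ (κ q + r q + 1) * (Nat.factorial (r q) : ℝ)))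

lemma Phi_zero (f : ℝ → ℝ) {m : ℕ} (b : Fin m → ℝ) :
    Phi f 0 b = ∑ i, f (b i) * ∏ q ∈ Finset.univ.erase i, (b i - b q)⁻¹ := by
  unfold Phi
  refine Finset.sum_congr rfl fun i _ => ?_
  simp only [Pi.zero_apply, Finset.Nat.antidiagonalTuple_zero_right, Finset.sum_singleton,
    iteratedDeriv_zero, Nat.factorial_zero, Nat.cast_one, pow_zero, mul_one, div_one, one_mul,
    zero_add, add_zero, pow_one, Nat.zero_sub, one_div]

lemma update_injective {m : ℕ} {b : Fin m → ℝ} (hb : Function.Injective b) (t : Fin m)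
    {y : ℝ} (hy : y ∈ {y : ℝ | ∀ q, q ≠ t → y ≠ b q}) :
    Function.Injective (Function.update b t y) := by
  intro q q' h
  rw [Function.update_apply, Function.update_apply] at h
  by_cases h1 : q = t <;> by_cases h2 : q' = t
  · rw [h1, h2]
  · rw [if_pos h1, if_neg h2] at h
    exact absurd h (hy q' h2)
  · rw [if_neg h1, if_pos h2] at h
    exact absurd h.symm (hy q h1)
  · rw [if_neg h1, if_neg h2] at h
    exact hb h

end mainpart

section stepmain

lemma step_main (f : ℝ → ℝ) {m N : ℕ} (hf : ContDiff ℝ N f) (κ : Fin m → ℕ) (t : Fin m)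
    (hκt : κ t = 0) (n : ℕ) (hn : n ≤ N) {b : Fin m → ℝ} (hb : Function.Injective b) :
    iteratedDeriv n (fun y => Phi f κ (Function.update b t y)) (b t)
      = Phi f (Function.update κ t n) b := by
  classical
  set u := {y : ℝ | ∀ q, q ≠ t → y ≠ b q} with hu_def
  have hu : IsOpen u := isOpen_avoid b t
  have hbt : b t ∈ u := mem_avoid hb t
  -- the family of terms
  set T : Fin m → ℝ → ℝ := fun i y => (Nat.factorial (κ i) : ℝ) *
    ∑ r ∈ Finset.Nat.antidiagonalTuple m (κ i),
      (iteratedDeriv (r i) f (Function.update b t y i) * (-1 : ℝ) ^ (κ i - r i)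
          / (Nat.factorial (r i) : ℝ)) *
        ∏ q ∈ Finset.univ.erase i,
          ((Nat.factorial (κ q + r q) : ℝ) /
            ((Function.update b t y i - Function.update b t y q) ^ (κ q + r q + 1)
              * (Nat.factorial (r q) : ℝ))) with hT_def
  have hPhiT : (fun y => Phi f κ (Function.update b t y)) = fun y => ∑ i, T i y := rfl
  -- simplified forms of the terms
  have hTt : T t = fun y => f y * ∏ q ∈ Finset.univ.erase t,
      (((κ q).factorial : ℝ) / ((y - b q) ^ (κ q + 1))) := by
    funext y
    rw [hT_def]
    simp only [hκt, Finset.Nat.antidiagonalTuple_zero_right, Finset.sum_singleton,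
      Pi.zero_apply, iteratedDeriv_zero, Nat.factorial_zero, Nat.cast_one, Nat.zero_sub,
      pow_zero, mul_one, div_one, one_mul, zero_add, add_zero, Function.update_self]
    congr 1
    apply Finset.prod_congr rfl
    intro q hq
    rw [Function.update_of_ne (Finset.ne_of_mem_erase hq)]
  have hTi : ∀ i, i ≠ t → T i = fun y => ((κ i).factorial : ℝ) *
      ∑ r ∈ Finset.Nat.antidiagonalTuple m (κ i),
        (iteratedDeriv (r i) f (b i) * (-1:ℝ)^(κ i - r i) / ((r i).factorial : ℝ)) *
          ∏ q ∈ Finset.univ.erase i,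
            (((κ q + r q).factorial : ℝ)
              / ((b i - Function.update b t y q) ^ (κ q + r q + 1)
                  * ((r q).factorial : ℝ))) := by
    intro i hi
    funext y
    rw [hT_def]
    simp only [Function.update_of_ne hi]
  -- differentiability of the terms
  have hT : ∀ i ∈ Finset.univ, ContDiffOn ℝ n (T i) u := by
    intro i _
    by_cases hi : i = t
    · subst hi
      rw [hTt]
      refine ((hf.of_le (by exact_mod_cast hn)).contDiffOn).mul
        (contDiffOn_finprod _ fun q hq => ?_)
      refine contDiffOn_const.div
        (((contDiff_id.sub contDiff_const).pow (κ q + 1)).contDiffOn) fun y hy => ?_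
      exact pow_ne_zero _ (sub_ne_zero.mpr (hy q (Finset.ne_of_mem_erase hq)))
    · rw [hTi i hi]
      refine contDiffOn_const.mul (ContDiffOn.sum fun r _ => contDiffOn_const.mul
        (contDiffOn_finprod _ fun q hq => ?_))
      refine contDiffOn_const.div ?_ fun y hy => ?_
      · by_cases hqt : q = t
        · rw [hqt]
          simp only [Function.update_self]
          exact ((contDiff_const.sub contDiff_id).pow _).contDiffOn.mul contDiffOn_const
        · simp only [Function.update_of_ne hqt]
          exact contDiffOn_const
      · by_cases hqt : q = t
        · rw [hqt, Function.update_self]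
          refine mul_ne_zero (pow_ne_zero _ (sub_ne_zero.mpr ?_))
            (Nat.cast_ne_zero.mpr (r t).factorial_ne_zero)
          exact fun h => (hy i hi) h.symm
        · rw [Function.update_of_ne hqt]
          refine mul_ne_zero (pow_ne_zero _ (sub_ne_zero.mpr ?_))
            (Nat.cast_ne_zero.mpr (r q).factorial_ne_zero)
          exact fun h => (Finset.ne_of_mem_erase hq) (hb h).symm
  rw [hPhiT, iteratedDeriv_fun_sum_aux Finset.univ hu hbt hT]
  unfold Phi
  refine Finset.sum_congr rfl fun i _ => ?_
  by_cases hi : i = t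
  · subst hi
    rw [hTt, step_term_t f hf κ i n hn hb, Function.update_self]
    congr 1
    refine Finset.sum_congr rfl fun r _ => ?_
    congr 1
    refine Finset.prod_congr rfl fun q hq => ?_
    rw [Function.update_of_ne (Finset.ne_of_mem_erase hq)]
  · rw [hTi i hi, step_term_other f κ hi hκt n hb, Function.update_of_ne hi]

end stepmain

lemma foldr_eq (f : ℝ → ℝ) {m N : ℕ} (hf : ContDiff ℝ N f) (k : Fin m → ℕ)
    (hkN : ∀ q, k q ≤ N) :
    ∀ l : List (Fin m), l.Nodup → ∀ b : Fin m → ℝ, Function.Injective b →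
      (l.foldr (fun i G => pderivN i (k i) G) (Phi f 0)) b
        = Phi f (fun q => if q ∈ l then k q else 0) b := by
  intro l
  induction l with
  | nil =>
    intro _ b _
    simp only [List.foldr_nil, List.not_mem_nil, if_false]
    rfl
  | cons t l' ih =>
    intro hnd b hb
    have hnd' : l'.Nodup := (List.nodup_cons.mp hnd).2
    have htl' : t ∉ l' := (List.nodup_cons.mp hnd).1
    simp only [List.foldr_cons]
    show pderivN t (k t) (l'.foldr (fun i G => pderivN i (k i) G) (Phi f 0)) b = _
    set κ' : Fin m → ℕ := fun q => if q ∈ l' then k q else 0 with hκ'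
    have hev : (fun y => (l'.foldr (fun i G => pderivN i (k i) G) (Phi f 0))
        (Function.update b t y)) =ᶠ[nhds (b t)] fun y => Phi f κ' (Function.update b t y) := by
      filter_upwards [(isOpen_avoid b t).mem_nhds (mem_avoid hb t)] with y hy
      exact ih hnd' (Function.update b t y) (update_injective hb t hy)
    show iteratedDeriv (k t) (fun y => (l'.foldr (fun i G => pderivN i (k i) G) (Phi f 0))
      (Function.update b t y)) (b t) = _
    rw [Filter.EventuallyEq.iteratedDeriv_eq (k t) hev]
    have hκ't : κ' t = 0 := by simp [hκ', htl']
    rw [step_main f hf κ' t hκ't (k t) (hkN t) hb]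
    congr 1
    funext q
    by_cases hq : q = t
    · rw [hq, Function.update_self]
      simp [List.mem_cons]
    · rw [Function.update_of_ne hq]
      simp [hκ', List.mem_cons, hq]

theorem mixedPartial_lagrange_form (m : ℕ) (hm : 1 ≤ m) (f : ℝ → ℝ) (k : Fin m → ℕ)
    (hf : ContDiff ℝ (Finset.univ.sup k : ℕ) f) (a : Fin m → ℝ)
    (ha : Function.Injective a) :
    mixedPartial k (fun b => ∑ i, f (b i) * ∏ q ∈ Finset.univ.erase i, (b i - b q)⁻¹) a
      = ∑ i, (Nat.factorial (k i) : ℝ) *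
          ∑ r ∈ Finset.Nat.antidiagonalTuple m (k i),
            (iteratedDeriv (r i) f (a i) * (-1 : ℝ) ^ (k i - r i) / (Nat.factorial (r i) : ℝ)) *
              ∏ q ∈ Finset.univ.erase i,
                ((Nat.factorial (k q + r q) : ℝ) /
                  ((a i - a q) ^ (k q + r q + 1) * (Nat.factorial (r q) : ℝ))) := by
  have hbase : (fun b : Fin m → ℝ => ∑ i, f (b i) * ∏ q ∈ Finset.univ.erase i, (b i - b q)⁻¹)
      = Phi f 0 := by
    funext b
    rw [Phi_zero]
  rw [mixedPartial, hbase,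
    foldr_eq f hf k (fun q => Finset.le_sup (Finset.mem_univ q)) (List.finRange m)
      (List.nodup_finRange m) a ha]
  have : (fun q => if q ∈ List.finRange m then k q else 0) = k := by
    funext q
    simp [List.mem_finRange]
  rw [this]
  rfl
end

section
/- For any positive integer n and real z > 0, the n-th derivative of z ↦ γ(1,z)/z = (1 - e^{-z})/z equals (-1)^n γ(n+1, z)/z^{n+1}, where γ is the lower incomplete gamma function. -/
open Nat

/-- The lower incomplete gamma function `γ(a, z) = ∫_0^z t^(a-1) e^(-t) dt`. -/
noncomputable def lowerGamma (a z : ℝ) : ℝ := ∫ t in (0:ℝ)..z, t ^ (a - 1) * Real.exp (-t)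

private noncomputable def Sg (n : ℕ) (w : ℝ) : ℝ := ∑ r ∈ Finset.range (n + 1), w ^ r / r !

private lemma hasDerivAt_Sg (n : ℕ) (w : ℝ) :
    HasDerivAt (Sg n) (Sg n w - w ^ n / n !) w := by
  have h : HasDerivAt (Sg n)
      (∑ r ∈ Finset.range (n + 1), (r : ℝ) * w ^ (r - 1) / r !) w := by
    apply HasDerivAt.fun_sum
    intro r _
    simpa [div_eq_mul_inv, mul_comm, mul_assoc, mul_left_comm] using
      ((hasDerivAt_pow r w).div_const (r ! : ℝ))
  convert h using 1
  rw [Finset.sum_range_succ' (fun r => (r : ℝ) * w ^ (r - 1) / r !) n]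
  have : ∀ i : ℕ, ((i : ℝ) + 1) * w ^ i / (i + 1)! = w ^ i / i ! := by
    intro i
    rw [Nat.factorial_succ]
    push_cast
    field_simp
  simp only [Nat.add_sub_cancel]
  push_cast
  rw [Finset.sum_congr rfl (fun i _ => this i)]
  unfold Sg
  rw [Finset.sum_range_succ]
  simp

private lemma hasDerivAt_E (n : ℕ) (w : ℝ) :
    HasDerivAt (fun w => Real.exp (-w) * Sg n w) (-(Real.exp (-w) * w ^ n / n !)) w := by
  have h := ((hasDerivAt_neg w).exp.fun_mul (hasDerivAt_Sg n w))
  refine h.congr_deriv ?_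
  ring

private lemma Sg_zero (n : ℕ) : Sg n 0 = 1 := by
  unfold Sg
  rw [Finset.sum_range_succ']
  simp

private lemma lowerGamma_eq (n : ℕ) (z : ℝ) :
    lowerGamma ((n : ℝ) + 1) z = (n ! : ℝ) * (1 - Real.exp (-z) * Sg n z) := by
  unfold lowerGamma
  have hcongr : ∀ t : ℝ, t ^ ((n : ℝ) + 1 - 1) * Real.exp (-t) = t ^ n * Real.exp (-t) := by
    intro t
    norm_num [Real.rpow_natCast]
  rw [intervalIntegral.integral_congr (fun t _ => hcongr t)]
  have key : ∫ t in (0:ℝ)..z, t ^ n * Real.exp (-t)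
      = (-( (n ! : ℝ) * (Real.exp (-z) * Sg n z))) - (-( (n ! : ℝ) * (Real.exp (-0) * Sg n 0))) := by
    apply intervalIntegral.integral_eq_sub_of_hasDerivAt
    · intro t _
      have h := ((hasDerivAt_E n t).const_mul (n ! : ℝ)).fun_neg
      convert h using 1
      have : (n ! : ℝ) ≠ 0 := by positivity
      field_simp
    · apply Continuous.intervalIntegrable
      continuity
  rw [key, Sg_zero]
  simp
  ring

private lemma iter_eq (n : ℕ) : ∀ z : ℝ, 0 < z →
    iteratedDeriv n (fun w => (1 - Real.exp (-w)) / w) z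
      = (-1 : ℝ) ^ n * (n ! : ℝ) * (1 - Real.exp (-z) * Sg n z) / z ^ (n + 1) := by
  induction n with
  | zero =>
    intro z hz
    simp [iteratedDeriv_zero, Sg_zero, Sg]
  | succ n ih =>
    intro z hz
    rw [iteratedDeriv_succ]
    have hev : iteratedDeriv n (fun w => (1 - Real.exp (-w)) / w)
        =ᶠ[nhds z] (fun w => (-1 : ℝ) ^ n * (n ! : ℝ) * (1 - Real.exp (-w) * Sg n w) / w ^ (n + 1)) := by
      filter_upwards [IsOpen.mem_nhds isOpen_Ioi hz] with w hw
      exact ih w hw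
    rw [hev.deriv_eq]
    have hpow : HasDerivAt (fun w : ℝ => w ^ (n + 1)) (((n : ℝ) + 1) * z ^ n) z := by
      simpa using hasDerivAt_pow (n + 1) z
    have hnum : HasDerivAt (fun w => (-1 : ℝ) ^ n * (n ! : ℝ) * (1 - Real.exp (-w) * Sg n w))
        ((-1 : ℝ) ^ n * (n ! : ℝ) * (Real.exp (-z) * z ^ n / n !)) z := by
      have h := ((hasDerivAt_const z (1:ℝ)).fun_sub (hasDerivAt_E n z)).const_mul
        ((-1 : ℝ) ^ n * (n ! : ℝ))
      refine h.congr_deriv ?_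
      ring
    have hz' : z ^ (n + 1) ≠ 0 := by positivity
    have hd := hnum.fun_div hpow hz'
    rw [hd.deriv]
    have hfac : (n ! : ℝ) ≠ 0 := by positivity
    have hSsucc : Sg (n + 1) z = Sg n z + z ^ (n + 1) / (n + 1)! := by
      unfold Sg; rw [Finset.sum_range_succ]
    rw [hSsucc, Nat.factorial_succ]
    push_cast
    have hzne : z ≠ 0 := ne_of_gt hz
    field_simp
    ring

theorem iteratedDeriv_lowerGamma_one (n : ℕ) (hn : 1 ≤ n) (z : ℝ) (hz : 0 < z) :
    iteratedDeriv n (fun w => (1 - Real.exp (-w)) / w) z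
      = (-1 : ℝ) ^ n * lowerGamma ((n : ℝ) + 1) z / z ^ (n + 1) := by
  rw [lowerGamma_eq, iter_eq n z hz]
  ring
end

section
/- For 0 < ν < 1, c ≥ 1, and x < 0, the Liouville fractional integral of f(t) = (1 - e^t)/t (i.e., the lower incomplete gamma kernel) satisfies (1/Γ(ν)) ∫_{-∞}^x (x - τ)^{ν-1} (1 - e^τ)/τ dτ = -(-x)^{ν-1} γ(1-ν, -x), where γ is the lower incomplete gamma function. -/
namespace LiouvilleGammaKernelAux

open MeasureTheory Set Real


lemma subst (x : ℝ) (g : ℝ → ℝ) :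
    ∫ τ in Set.Iio x, g τ = ∫ t in Set.Ioi (0:ℝ), g (x - t) := by
  have h1 := Measure.measurePreserving_neg (volume : Measure ℝ)
  have h2 := measurePreserving_add_left (volume : Measure ℝ) x
  have hMP : MeasurePreserving (fun t : ℝ => x - t) volume volume := by
    simpa [Function.comp_def, sub_eq_add_neg] using h2.comp h1
  have hEmb : MeasurableEmbedding (fun t : ℝ => x - t) :=
    (Homeomorph.subLeft x).measurableEmbedding
  have hpre : (fun t : ℝ => x - t) ⁻¹' (Set.Iio x) = Set.Ioi 0 := by ext t; simp
  rw [← hMP.setIntegral_preimage_emb hEmb g (Set.Iio x), hpre]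

lemma subst_int (x : ℝ) (g : ℝ → ℝ) :
    IntegrableOn (fun t => g (x - t)) (Set.Ioi (0:ℝ)) ↔ IntegrableOn g (Set.Iio x) := by
  have h1 := Measure.measurePreserving_neg (volume : Measure ℝ)
  have h2 := measurePreserving_add_left (volume : Measure ℝ) x
  have hMP : MeasurePreserving (fun t : ℝ => x - t) volume volume := by
    simpa [Function.comp_def, sub_eq_add_neg] using h2.comp h1
  have hEmb : MeasurableEmbedding (fun t : ℝ => x - t) :=
    (Homeomorph.subLeft x).measurableEmbedding
  have hpre : (fun t : ℝ => x - t) ⁻¹' (Set.Iio x) = Set.Ioi 0 := by ext t; simp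
  have := hMP.integrableOn_comp_preimage (f := g) (s := Set.Iio x) hEmb
  rwa [hpre] at this

lemma gammaInt (ν u : ℝ) (hν₀ : 0 < ν) (hu : 0 < u) :
    IntegrableOn (fun t : ℝ => t ^ (ν - 1) * Real.exp (-(u * t))) (Set.Ioi 0) := by
  have := integrableOn_rpow_mul_exp_neg_mul_rpow (p := 1) (s := ν - 1) (b := u)
    (by linarith) zero_lt_one hu
  refine this.congr_fun (fun t ht => ?_) measurableSet_Ioi
  simp [Real.rpow_one]

lemma lemA_val (ν x u : ℝ) (hν₀ : 0 < ν) (hu : 0 < u) :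
    ∫ τ in Set.Iio x, (x - τ) ^ (ν - 1) * Real.exp (u * τ)
      = Real.Gamma ν * (u ^ (-ν) * Real.exp (u * x)) := by
  rw [subst x _]
  have : ∀ t : ℝ, (x - (x - t)) ^ (ν - 1) * Real.exp (u * (x - t))
      = (t ^ (ν - 1) * Real.exp (-(u * t))) * Real.exp (u * x) := by
    intro t
    have : u * (x - t) = -(u * t) + u * x := by ring
    rw [this, Real.exp_add, sub_sub_cancel, mul_assoc]
  simp_rw [this]
  rw [integral_mul_const, Real.integral_rpow_mul_exp_neg_mul_Ioi hν₀ hu]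
  rw [one_div, Real.inv_rpow hu.le, ← Real.rpow_neg hu.le]
  ring

lemma lemA_int (ν x u : ℝ) (hν₀ : 0 < ν) (hu : 0 < u) :
    IntegrableOn (fun τ => (x - τ) ^ (ν - 1) * Real.exp (u * τ)) (Set.Iio x) := by
  rw [← subst_int x]
  refine IntegrableOn.congr_fun ((gammaInt ν u hν₀ hu).mul_const (Real.exp (u * x)))
    (fun t ht => ?_) measurableSet_Ioi
  have h : u * (x - t) = -(u * t) + u * x := by ring
  simp [sub_sub_cancel, h, Real.exp_add, mul_assoc]

lemma fubini (ν x : ℝ) (hν₀ : 0 < ν) (hν₁ : ν < 1) (hx : x < 0) :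
    ∫ τ in Set.Iio x, ∫ u in Set.Ioc (0:ℝ) 1, (x - τ) ^ (ν - 1) * Real.exp (u * τ)
      = ∫ u in Set.Ioc (0:ℝ) 1, ∫ τ in Set.Iio x, (x - τ) ^ (ν - 1) * Real.exp (u * τ) := by
  apply MeasureTheory.integral_integral_swap
  have hmeas : AEStronglyMeasurable
      (Function.uncurry fun τ u => (x - τ) ^ (ν - 1) * Real.exp (u * τ))
      ((volume.restrict (Set.Iio x)).prod (volume.restrict (Set.Ioc 0 1))) := by
    apply Measurable.aestronglyMeasurable
    exact ((measurable_const.sub measurable_fst).pow measurable_const).mul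
      ((measurable_snd.mul measurable_fst).exp)
  rw [MeasureTheory.integrable_prod_iff' hmeas]
  constructor
  · refine (ae_restrict_iff' measurableSet_Ioc).mpr (ae_of_all _ fun u hu => ?_)
    exact lemA_int ν x u hν₀ hu.1
  · have hg : IntegrableOn (fun u : ℝ => Real.Gamma ν * (u ^ (-ν) * Real.exp (u * x)))
        (Set.Ioc 0 1) := by
      have h1 : IntegrableOn (fun u : ℝ => u ^ (-ν)) (Set.Ioc (0:ℝ) 1) := by
        have := intervalIntegral.intervalIntegrable_rpow' (a := 0) (b := 1)
          (r := -ν) (by linarith)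
        rwa [intervalIntegrable_iff_integrableOn_Ioc_of_le zero_le_one] at this
      refine Integrable.mono' ((h1.const_mul (Real.Gamma ν))) ?_ ?_
      · apply Measurable.aestronglyMeasurable
        exact measurable_const.mul
          ((measurable_id.pow measurable_const).mul ((measurable_id.mul measurable_const).exp))
      · refine (ae_restrict_iff' measurableSet_Ioc).mpr (ae_of_all _ fun u hu => ?_)
        have h2 : (0:ℝ) < u ^ (-ν) := Real.rpow_pos_of_pos hu.1 _
        have h3 : Real.exp (u * x) ≤ 1 := by
          rw [Real.exp_le_one_iff]
          exact mul_nonpos_of_nonneg_of_nonpos hu.1.le hx.le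
        have h4 : (0:ℝ) < Real.Gamma ν := Real.Gamma_pos_of_pos hν₀
        rw [Real.norm_eq_abs, abs_of_nonneg (by positivity)]
        calc Real.Gamma ν * (u ^ (-ν) * Real.exp (u * x))
            ≤ Real.Gamma ν * (u ^ (-ν) * 1) := by
              apply mul_le_mul_of_nonneg_left _ h4.le
              exact mul_le_mul_of_nonneg_left h3 h2.le
          _ = Real.Gamma ν * u ^ (-ν) := by ring
    refine IntegrableOn.congr_fun hg (fun u hu => ?_) measurableSet_Ioc
    rw [← lemA_val ν x u hν₀ hu.1]
    refine (setIntegral_congr_fun measurableSet_Iio (fun τ hτ => ?_)).symm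
    have h5 : (0:ℝ) < (x - τ) ^ (ν - 1) := Real.rpow_pos_of_pos (by simp at hτ; linarith) _
    simp only [Function.uncurry_apply_pair]
    rw [Real.norm_eq_abs, abs_of_nonneg (mul_nonneg h5.le (Real.exp_pos _).le)]

lemma liouville_key (ν x : ℝ)
    (hν₀ : 0 < ν) (hν₁ : ν < 1) (hx : x < 0) :
    (1 / Real.Gamma ν) *
        ∫ τ in Set.Iio x, (x - τ) ^ (ν - 1) * ((1 - Real.exp τ) / τ)
      = -((-x) ^ (ν - 1)) * (∫ t in (0:ℝ)..(-x), t ^ ((1 - ν) - 1) * Real.exp (-t)) := by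
  have hy : (0:ℝ) < -x := by linarith
  have hΓ : (0:ℝ) < Real.Gamma ν := Real.Gamma_pos_of_pos hν₀
  set I : ℝ := ∫ u in Set.Ioc (0:ℝ) 1, u ^ (-ν) * Real.exp (u * x) with hI
  -- Step 1: kernel as inner integral
  have step1 : ∫ τ in Set.Iio x, (x - τ) ^ (ν - 1) * ((1 - Real.exp τ) / τ)
      = -∫ τ in Set.Iio x, ∫ u in Set.Ioc (0:ℝ) 1, (x - τ) ^ (ν - 1) * Real.exp (u * τ) := by
    rw [← integral_neg]
    refine setIntegral_congr_fun measurableSet_Iio (fun τ hτ => ?_)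
    have hτ0 : τ < 0 := lt_trans (by simpa using hτ) hx
    have hτne : τ ≠ 0 := hτ0.ne
    have hinner : ∫ u in Set.Ioc (0:ℝ) 1, Real.exp (u * τ) = (Real.exp τ - 1) / τ := by
      rw [← intervalIntegral.integral_of_le zero_le_one]
      rw [intervalIntegral.integral_comp_mul_right (fun v => Real.exp v) hτne]
      simp [integral_exp, smul_eq_mul]
      field_simp
    have : ∫ u in Set.Ioc (0:ℝ) 1, (x - τ) ^ (ν - 1) * Real.exp (u * τ)
        = (x - τ) ^ (ν - 1) * ((Real.exp τ - 1) / τ) := by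
      rw [← hinner, integral_const_mul]
    rw [this]
    field_simp
    ring
  -- Step 2: Fubini + value
  have step2 : ∫ τ in Set.Iio x, ∫ u in Set.Ioc (0:ℝ) 1, (x - τ) ^ (ν - 1) * Real.exp (u * τ)
      = Real.Gamma ν * I := by
    rw [fubini ν x hν₀ hν₁ hx, hI, ← integral_const_mul]
    refine setIntegral_congr_fun measurableSet_Ioc (fun u hu => ?_)
    rw [lemA_val ν x u hν₀ hu.1]
  -- Step 3: lowerGamma substitution
  have step3 : (∫ t in (0:ℝ)..(-x), t ^ ((1 - ν) - 1) * Real.exp (-t))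
      = (-x) * ((-x) ^ (-ν) * I) := by
    have hc : (-x) ≠ 0 := hy.ne'
    have key : (-x) • ∫ u in (0:ℝ)..1, ((-x) * u) ^ ((1 - ν) - 1) * Real.exp (-((-x) * u))
        = ∫ t in (0:ℝ)..(-x), t ^ ((1 - ν) - 1) * Real.exp (-t) := by
      have := intervalIntegral.smul_integral_comp_mul_left
        (fun t => t ^ ((1 - ν) - 1) * Real.exp (-t)) (a := 0) (b := 1) (-x)
      simpa using this
    have expand : ∫ u in (0:ℝ)..1, ((-x) * u) ^ ((1 - ν) - 1) * Real.exp (-((-x) * u))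
        = (-x) ^ (-ν) * I := by
      have congr1 : ∀ u ∈ Set.uIcc (0:ℝ) 1,
          ((-x) * u) ^ ((1 - ν) - 1) * Real.exp (-((-x) * u))
            = (-x) ^ (-ν) * (u ^ (-ν) * Real.exp (u * x)) := by
        intro u hu
        rw [Set.uIcc_of_le zero_le_one] at hu
        have hu0 : (0:ℝ) ≤ u := hu.1
        have h1 : ((1:ℝ) - ν) - 1 = -ν := by ring
        have h2 : -((-x) * u) = u * x := by ring
        rw [h1, h2, Real.mul_rpow hy.le hu0]
        ring
      rw [intervalIntegral.integral_congr congr1, intervalIntegral.integral_const_mul, hI,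
        intervalIntegral.integral_of_le zero_le_one]
    rw [← key, expand, smul_eq_mul]
  rw [step1, step2, step3]
  have hpow : (-x) ^ (ν - 1) * (-x) ^ (-ν) * (-x) = 1 := by
    have h1 : (-x) ^ (ν - 1) * (-x) ^ (-ν) = (-x) ^ (-1 : ℝ) := by
      rw [← Real.rpow_add hy]; congr 1; ring
    rw [h1, Real.rpow_neg_one]
    exact inv_mul_cancel₀ hy.ne'
  have hR : -((-x) ^ (ν - 1)) * (-x * ((-x) ^ (-ν) * I)) = -I := by
    linear_combination (-I) * hpow
  rw [hR]
  field_simp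

end LiouvilleGammaKernelAux

theorem liouville_fractional_integral_gamma_kernel (ν x : ℝ)
    (hν₀ : 0 < ν) (hν₁ : ν < 1) (hx : x < 0) :
    (1 / Real.Gamma ν) *
        ∫ τ in Set.Iio x, (x - τ) ^ (ν - 1) * ((1 - Real.exp τ) / τ)
      = -((-x) ^ (ν - 1)) * lowerGamma (1 - ν) (-x) := by
  rw [lowerGamma]
  exact LiouvilleGammaKernelAux.liouville_key ν x hν₀ hν₁ hx
end

section
/- For a (n-1)-times continuously differentiable function f and real points a_1, ..., a_n (n ≥ 2), the Hermite–Genocchi formula holds: the divided difference f[a_1, ..., a_n] equals ∫_{S_{n-1}} f^{(n-1)}(t_1 a_1 + ... + t_n a_n) dt_1 ... dt_{n-1}, where S_{n-1} = {(t_1,...,t_{n-1}) ∈ ℝ_{≥0}^{n-1} : ∑ t_i ≤ 1} and t_n = 1 - ∑_{i=1}^{n-1} t_i. -/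
open MeasureTheory

lemma image_succAbove {m : ℕ} (q : Fin (m+1)) :
    Finset.image q.succAbove Finset.univ = Finset.univ.erase q := by
  ext i
  simp only [Finset.mem_image, Finset.mem_univ, true_and, Finset.mem_erase, and_true]
  constructor
  · rintro ⟨j, rfl⟩; exact q.succAbove_ne j
  · intro h; exact Fin.exists_succAbove_eq h

lemma divDiff_comp_succAbove {m : ℕ} (f : ℝ → ℝ) (y : Fin (m+1) → ℝ)
    (hy : Function.Injective y) (q : Fin (m+1)) :
    divDiff f (y ∘ q.succAbove) =
      ∑ j, f (y j) * (y j - y q) / ∏ k ∈ Finset.univ.erase j, (y j - y k) := by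
  have hinj : Function.Injective q.succAbove := Fin.succAbove_right_injective
  have h0 : f (y q) * (y q - y q) / ∏ k ∈ Finset.univ.erase q, (y q - y k) = 0 := by
    simp
  rw [← Finset.sum_erase (f := fun j => f (y j) * (y j - y q) / ∏ k ∈ Finset.univ.erase j, (y j - y k)) Finset.univ h0, ← image_succAbove q]
  rw [Finset.sum_image (fun x _ y _ h => hinj h)]
  refine Finset.sum_congr rfl fun j' _ => ?_
  have hne : q ≠ q.succAbove j' := (q.succAbove_ne j').symm
  have hc : y (q.succAbove j') - y q ≠ 0 := sub_ne_zero.2 (fun h => hne (hy h).symm)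
  have hprod : ∏ k ∈ Finset.univ.erase (q.succAbove j'), (y (q.succAbove j') - y k)
      = (y (q.succAbove j') - y q) *
        ∏ k' ∈ Finset.univ.erase j', (y (q.succAbove j') - y (q.succAbove k')) := by
    rw [← Finset.mul_prod_erase (a := q) _ _ (Finset.mem_erase.2 ⟨hne, Finset.mem_univ q⟩),
      Finset.erase_right_comm, ← image_succAbove q, ← Finset.image_erase hinj,
      Finset.prod_image (fun x _ y _ h => hinj h)]
  rw [mul_comm (f _), hprod, mul_div_mul_left _ _ hc]
  rfl

lemma divDiff_rec {m : ℕ} (f : ℝ → ℝ) (y : Fin (m+1) → ℝ)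
    (hy : Function.Injective y) (p q : Fin (m+1)) :
    divDiff f (y ∘ q.succAbove) - divDiff f (y ∘ p.succAbove)
      = (y p - y q) * divDiff f y := by
  rw [divDiff_comp_succAbove f y hy q, divDiff_comp_succAbove f y hy p, divDiff,
    Finset.mul_sum, ← Finset.sum_sub_distrib]
  refine Finset.sum_congr rfl fun j _ => ?_
  ring

/-- The standard simplex set. -/
def stdSx (n : ℕ) : Set (Fin n → ℝ) := {t | (∀ i, 0 ≤ t i) ∧ ∑ i, t i ≤ 1}

lemma stdSx_isClosed (n : ℕ) : IsClosed (stdSx n) := by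
  have h1 : IsClosed {t : Fin n → ℝ | ∀ i, 0 ≤ t i} := by
    have : {t : Fin n → ℝ | ∀ i, 0 ≤ t i} = ⋂ i, {t | 0 ≤ t i} := by
      ext t; simp [Set.mem_iInter]
    rw [this]
    exact isClosed_iInter fun i => isClosed_le continuous_const (continuous_apply i)
  have h2 : IsClosed {t : Fin n → ℝ | ∑ i, t i ≤ 1} :=
    isClosed_le (continuous_finset_sum _ fun i _ => continuous_apply i) continuous_const
  exact h1.inter h2

lemma stdSx_isCompact (n : ℕ) : IsCompact (stdSx n) := by
  refine IsCompact.of_isClosed_subset (isCompact_Icc (a := (0 : Fin n → ℝ)) (b := 1))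
    (stdSx_isClosed n) ?_
  rintro t ⟨h1, h2⟩
  constructor
  · intro i; exact h1 i
  · intro i
    calc t i ≤ ∑ j, t j := Finset.single_le_sum (fun j _ => h1 j) (Finset.mem_univ i)
    _ ≤ 1 := h2

lemma stdSx_measurableSet (n : ℕ) : MeasurableSet (stdSx n) :=
  (stdSx_isClosed n).measurableSet

lemma integrableOn_stdSx {n : ℕ} {h : (Fin n → ℝ) → ℝ} (hc : Continuous h) :
    IntegrableOn h (stdSx n) := by
  exact hc.continuousOn.integrableOn_compact (stdSx_isCompact n)

theorem HG : ∀ (n : ℕ) (f : ℝ → ℝ), ContDiff ℝ (n : ℕ) f →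
    ∀ (a : Fin (n + 1) → ℝ), Function.Injective a →
    divDiff f a =
      ∫ t in {t : Fin n → ℝ | (∀ i, 0 ≤ t i) ∧ ∑ i, t i ≤ 1},
        iteratedDeriv n f ((∑ i, t i * a i.castSucc) + (1 - ∑ i, t i) * a (Fin.last n)) := by
  intro n
  induction n with
  | zero =>
    intro f hf a ha
    have hset : {t : Fin 0 → ℝ | (∀ i, 0 ≤ t i) ∧ ∑ i, t i ≤ 1} = Set.univ := by
      ext t; simp
    rw [hset, Measure.restrict_univ]
    simp only [Finset.univ_eq_empty, Finset.sum_empty, iteratedDeriv_zero, zero_add, sub_zero,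
      one_mul]
    rw [integral_const]
    have hv : (volume (Set.univ : Set (Fin 0 → ℝ))) = 1 := by
      rw [volume_pi, Measure.pi_univ]; simp
    rw [divDiff]
    simp [hv, Fin.last, measureReal_def]
  | succ n IH =>
    intro f hf a ha
    -- notation
    set p : Fin (n + 2) := (Fin.last n).castSucc with hp
    set q : Fin (n + 2) := Fin.last (n + 1) with hq
    set d : ℝ := a p - a q with hd
    have hpq : p ≠ q := by
      rw [hp, hq]; exact (Fin.castSucc_lt_last (Fin.last n)).ne
    have hdne : d ≠ 0 := sub_ne_zero.2 fun h => hpq (ha h)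
    set Gn : ℝ → ℝ := iteratedDeriv n f with hGn
    set g : ℝ → ℝ := iteratedDeriv (n + 1) f with hg'
    have hgc : Continuous g := hf.continuous_iteratedDeriv (n + 1) (by exact_mod_cast le_rfl)
    have hfn : ContDiff ℝ (n : ℕ) f := hf.of_le (by exact_mod_cast Nat.le_succ n)
    have hGnd : Differentiable ℝ Gn :=
      hf.differentiable_iteratedDeriv n (by exact_mod_cast Nat.lt_succ_self n)
    set L : (Fin (n + 1) → ℝ) → ℝ := fun t =>
      (∑ i, t i * a i.castSucc) + (1 - ∑ i, t i) * a q with hL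
    set c : (Fin n → ℝ) → ℝ := fun t' =>
      (∑ i, t' i * a i.castSucc.castSucc) + (1 - ∑ i, t' i) * a q with hc
    -- succAbove computations
    have hpsA : ∀ i : Fin n, p.succAbove i.castSucc = i.castSucc.castSucc := by
      intro i
      apply Fin.succAbove_of_castSucc_lt
      rw [hp]
      exact Fin.castSucc_lt_castSucc_iff.2 (Fin.castSucc_lt_last i)
    have hpsB : p.succAbove (Fin.last n) = q := by
      rw [Fin.succAbove_of_le_castSucc _ _ (le_of_eq hp), Fin.succ_last, hq]
    -- snoc computations
    have hsnoc_mem : ∀ (t' : Fin n → ℝ) (s : ℝ),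
        (Fin.snoc t' s ∈ stdSx (n+1))
          ↔ ((∀ i, 0 ≤ t' i) ∧ s ∈ Set.Icc 0 (1 - ∑ i, t' i)) := by
      intro t' s
      have hsum : ∑ i : Fin (n+1), (Fin.snoc t' s : Fin (n+1) → ℝ) i = (∑ i, t' i) + s := by
        rw [Fin.sum_univ_castSucc]
        simp [Fin.snoc_castSucc, Fin.snoc_last]
      constructor
      · rintro ⟨h1, h2⟩
        refine ⟨fun i => by simpa [Fin.snoc_castSucc] using h1 i.castSucc, ?_, ?_⟩
        · simpa [Fin.snoc_last] using h1 (Fin.last n)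
        · rw [hsum] at h2; linarith
      · rintro ⟨h1, hs0, hs1⟩
        refine ⟨fun i => ?_, ?_⟩
        · refine Fin.lastCases ?_ ?_ i
          · simpa [Fin.snoc_last] using hs0
          · intro j; simpa [Fin.snoc_castSucc] using h1 j
        · rw [hsum]; linarith
    have hsnoc_L : ∀ (t' : Fin n → ℝ) (s : ℝ), L (Fin.snoc t' s) = c t' + s * d := by
      intro t' s
      rw [hL, hc, hd]
      simp only [Fin.sum_univ_castSucc, Fin.snoc_castSucc, Fin.snoc_last]
      rw [hp]
      ring
    -- RHS as integral over the product space
    have hS1 : MeasurableSet (stdSx (n+1)) := stdSx_measurableSet (n+1)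
    have hLc : Continuous L := by
      rw [hL]; fun_prop
    have hint : Integrable
        ((stdSx (n+1)).indicator (fun t => g (L t))) := by
      rw [integrable_indicator_iff (stdSx_measurableSet (n+1))]
      exact integrableOn_stdSx (hgc.comp hLc)
    set F := (stdSx (n+1)).indicator (fun t => g (L t)) with hF
    have key : (∫ t in stdSx (n+1), g (L t)) = ∫ t' : Fin n → ℝ, ∫ s : ℝ, F (Fin.snoc t' s) := by
      rw [← integral_indicator hS1]
      set e := MeasurableEquiv.piFinSuccAbove (fun _ : Fin (n+1) => ℝ) (Fin.last n) with hE
      have hmp : MeasurePreserving e :=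
        volume_preserving_piFinSuccAbove (fun _ : Fin (n+1) => ℝ) (Fin.last n)
      have hmps : MeasurePreserving e.symm := hmp.symm
      have he : ∀ z : ℝ × (Fin n → ℝ), e.symm z = Fin.snoc z.2 z.1 := by
        intro z
        rw [hE]
        simp [MeasurableEquiv.piFinSuccAbove, Fin.insertNth_last', Fin.snocEquiv]
      have h1 : (∫ t, F t) = ∫ z : ℝ × (Fin n → ℝ), F (e.symm z) :=
        (hmps.integral_comp (MeasurableEquiv.measurableEmbedding _) F).symm
      have h2 : Integrable (fun z : ℝ × (Fin n → ℝ) => F (e.symm z)) :=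
        (hmps.integrable_comp_emb (MeasurableEquiv.measurableEmbedding _)).2 hint
      have h3 : Integrable (fun z : ℝ × (Fin n → ℝ) => F (e.symm z)) (volume.prod volume) := by
        rwa [← Measure.volume_eq_prod]
      rw [h1, Measure.volume_eq_prod, integral_prod_symm _ h3]
      refine integral_congr_ae (Filter.Eventually.of_forall fun t' => ?_)
      refine integral_congr_ae (Filter.Eventually.of_forall fun s => ?_)
      simp only [he]
    set Psi : (Fin n → ℝ) → ℝ :=
      fun t' => ∫ s in Set.Icc (0:ℝ) (1 - ∑ i, t' i), g (c t' + s * d) with hPsi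
    have hinner : ∀ t' : Fin n → ℝ,
        (∫ s : ℝ, F (Fin.snoc t' s)) = (stdSx n).indicator Psi t' := by
      intro t'
      by_cases h1 : ∀ i, 0 ≤ t' i
      · have heq : ∀ s : ℝ, F (Fin.snoc t' s)
            = (Set.Icc (0:ℝ) (1 - ∑ i, t' i)).indicator (fun s => g (c t' + s * d)) s := by
          intro s
          rw [hF]
          by_cases hs : s ∈ Set.Icc (0:ℝ) (1 - ∑ i, t' i)
          · rw [Set.indicator_of_mem ((hsnoc_mem t' s).2 ⟨h1, hs⟩), Set.indicator_of_mem hs,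
              hsnoc_L]
          · rw [Set.indicator_of_notMem (fun hmem => hs ((hsnoc_mem t' s).1 hmem).2),
              Set.indicator_of_notMem hs]
        rw [integral_congr_ae (Filter.Eventually.of_forall heq),
          integral_indicator measurableSet_Icc]
        by_cases h2 : ∑ i, t' i ≤ 1
        · rw [Set.indicator_of_mem (show t' ∈ stdSx n from ⟨h1, h2⟩)]
        · rw [Set.indicator_of_notMem (fun hmem => h2 hmem.2),
            Set.Icc_eq_empty (by push_neg at h2 ⊢; linarith), Measure.restrict_empty]
          exact integral_zero_measure _
      · have heq : ∀ s : ℝ, F (Fin.snoc t' s) = 0 := by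
          intro s
          rw [hF]
          exact Set.indicator_of_notMem (fun hmem => h1 ((hsnoc_mem t' s).1 hmem).1) _
        rw [integral_congr_ae (Filter.Eventually.of_forall heq), integral_zero,
          Set.indicator_of_notMem (fun hmem => h1 hmem.1)]
    set A1 : (Fin n → ℝ) → ℝ := fun t' =>
      Gn ((∑ i, t' i * a i.castSucc.castSucc) + (1 - ∑ i, t' i) * a p) with hA1
    set A2 : (Fin n → ℝ) → ℝ := fun t' => Gn (c t') with hA2
    have hcc : Continuous c := by rw [hc]; fun_prop
    have hGnc : Continuous Gn := hfn.continuous_iteratedDeriv n (by exact_mod_cast le_rfl)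
    have hFTC : ∀ t' ∈ stdSx n, Psi t' = (A1 t' - A2 t') / d := by
      intro t' ht'
      have hb : (0:ℝ) ≤ 1 - ∑ i, t' i := by have := ht'.2; linarith
      have hderiv : ∀ s ∈ Set.uIcc (0:ℝ) (1 - ∑ i, t' i),
          HasDerivAt (fun s => Gn (c t' + s * d)) (d * g (c t' + s * d)) s := by
        intro s _
        have hin : HasDerivAt (fun s : ℝ => c t' + s * d) d s := by
          simpa using ((hasDerivAt_id s).mul_const d).const_add (c t')
        have hout : HasDerivAt Gn (g (c t' + s * d)) (c t' + s * d) := by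
          have h := (hGnd (c t' + s * d)).hasDerivAt
          rw [hGn, ← iteratedDeriv_succ, ← hg'] at h
          exact h
        exact (hout.comp s hin).congr_deriv (mul_comm _ _)
      have hii : IntervalIntegrable (fun s => d * g (c t' + s * d)) volume 0
          (1 - ∑ i, t' i) := by
        apply Continuous.intervalIntegrable
        fun_prop
      have hkey := intervalIntegral.integral_eq_sub_of_hasDerivAt hderiv hii
      rw [intervalIntegral.integral_const_mul] at hkey
      have e1 : c t' + (1 - ∑ i, t' i) * d
          = (∑ i, t' i * a i.castSucc.castSucc) + (1 - ∑ i, t' i) * a p := by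
        rw [hc, hd]; simp only; ring
      have e2 : c t' + 0 * d = c t' := by ring
      calc Psi t' = ∫ s in (0:ℝ)..(1 - ∑ i, t' i), g (c t' + s * d) := by
            rw [hPsi]
            simp only
            rw [intervalIntegral.integral_of_le hb, integral_Icc_eq_integral_Ioc]
        _ = (d * ∫ s in (0:ℝ)..(1 - ∑ i, t' i), g (c t' + s * d)) / d := by
            rw [mul_div_cancel_left₀ _ hdne]
        _ = (Gn (c t' + (1 - ∑ i, t' i) * d) - Gn (c t' + 0 * d)) / d := by rw [hkey]
        _ = (A1 t' - A2 t') / d := by rw [e1, e2, hA1, hA2]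
    have hiA1 : IntegrableOn A1 (stdSx n) := by
      apply integrableOn_stdSx
      rw [hA1]
      apply hGnc.comp
      fun_prop
    have hiA2 : IntegrableOn A2 (stdSx n) := by
      apply integrableOn_stdSx
      rw [hA2]
      exact hGnc.comp hcc
    have hsplit : (∫ t' in stdSx n, (A1 t' - A2 t') / d)
        = ((∫ t' in stdSx n, A1 t') - ∫ t' in stdSx n, A2 t') / d := by
      rw [integral_div, integral_sub hiA1 hiA2]
    have hIH1 : (∫ t' in stdSx n, A1 t') = divDiff f (a ∘ Fin.castSucc) := by
      rw [IH f hfn (a ∘ Fin.castSucc) (ha.comp (Fin.castSucc_injective (n+1)))]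
      rfl
    have hIH2 : (∫ t' in stdSx n, A2 t') = divDiff f (a ∘ p.succAbove) := by
      rw [IH f hfn (a ∘ p.succAbove) (ha.comp Fin.succAbove_right_injective)]
      refine setIntegral_congr_fun (stdSx_measurableSet n) fun t' _ => ?_
      rw [hA2, hc]
      simp only [Function.comp_apply, hpsA, hpsB]
      rfl
    have hrec := divDiff_rec f a ha p q
    rw [hq, Fin.succAbove_last] at hrec
    calc divDiff f a
        = (divDiff f (a ∘ Fin.castSucc) - divDiff f (a ∘ p.succAbove)) / d := by
          rw [eq_div_iff hdne, hd, mul_comm]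
          exact hrec.symm
      _ = ((∫ t' in stdSx n, A1 t') - ∫ t' in stdSx n, A2 t') / d := by rw [hIH1, hIH2]
      _ = ∫ t' in stdSx n, (A1 t' - A2 t') / d := hsplit.symm
      _ = ∫ t' in stdSx n, Psi t' :=
          setIntegral_congr_fun (stdSx_measurableSet n) fun t' ht' => (hFTC t' ht').symm
      _ = ∫ t', (stdSx n).indicator Psi t' := (integral_indicator (stdSx_measurableSet n)).symm
      _ = ∫ t' : Fin n → ℝ, ∫ s : ℝ, F (Fin.snoc t' s) :=
          integral_congr_ae (Filter.Eventually.of_forall fun t' => (hinner t').symm)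
      _ = ∫ t in stdSx (n+1), g (L t) := key.symm

theorem hermite_genocchi (n : ℕ) (hn : 1 ≤ n) (f : ℝ → ℝ) (hf : ContDiff ℝ (n : ℕ) f)
    (a : Fin (n + 1) → ℝ) (ha : Function.Injective a) :
    divDiff f a =
      ∫ t in {t : Fin n → ℝ | (∀ i, 0 ≤ t i) ∧ ∑ i, t i ≤ 1},
        iteratedDeriv n f ((∑ i, t i * a i.castSucc) + (1 - ∑ i, t i) * a (Fin.last n)) := by
  exact HG n f hf a ha
end
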